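/- arXiv:2510.01545 — 5 statements merged into one kernel-verified Lean document; each statement's English description precedes it below -/
import Mathlib

section
/- For the function σ(x) = 1/(1 + exp(−x)), the second-order Taylor remainder bound holds: for every real x, |log σ(x) + log 2 − x/2| ≤ x²/8. -/
/-- The logistic sigmoid function. -/
noncomputable def sigmoid (x : ℝ) : ℝ := 1 / (1 + Real.exp (-x))

theorem logSigmoid_taylor_bound (x : ℝ) :
    |Real.log (sigmoid x) + Real.log 2 - x / 2| ≤ x ^ 2 / 8 := by
  have hpos : (0:ℝ) < 1 + Real.exp (-x) := by positivity
  have hkey : Real.log (sigmoid x) + Real.log 2 - x / 2 = -Real.log (Real.cosh (x/2)) := by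
    have h1 : (1 : ℝ) + Real.exp (-x) = Real.exp (-(x/2)) * (2 * Real.cosh (x/2)) := by
      rw [Real.cosh_eq, mul_div_cancel₀ _ (two_ne_zero), mul_add, ← Real.exp_add,
        ← Real.exp_add]
      norm_num
      ring
    have h2 : Real.log (1 + Real.exp (-x)) = -(x/2) + (Real.log 2 + Real.log (Real.cosh (x/2))) := by
      rw [h1, Real.log_mul (Real.exp_ne_zero _) (by positivity), Real.log_exp,
        Real.log_mul (by norm_num) (ne_of_gt (Real.cosh_pos _))]
    have h3 : Real.log (sigmoid x) = -Real.log (1 + Real.exp (-x)) := by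
      unfold sigmoid
      rw [Real.log_div one_ne_zero (ne_of_gt hpos), Real.log_one]
      ring
    rw [h3, h2]; ring
  rw [hkey]
  have hc1 : (1:ℝ) ≤ Real.cosh (x/2) := Real.one_le_cosh _
  have hlognn : 0 ≤ Real.log (Real.cosh (x/2)) := Real.log_nonneg hc1
  rw [abs_neg, abs_of_nonneg hlognn]
  have := Real.cosh_le_exp_half_sq (x/2)
  calc Real.log (Real.cosh (x/2)) ≤ Real.log (Real.exp ((x/2)^2/2)) :=
        Real.log_le_log (by positivity) this
    _ = (x/2)^2/2 := Real.log_exp _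
    _ = x^2/8 := by ring
end

section
/- Let S and A be finite sets, and let π_h, π_n : S → (probability distributions on A). Let d be a probability distribution on S. Suppose for all s, a, a' that |log π_h(a|s) − log π_h(a'|s)| ≤ M and |log π_n(a|s) − log π_n(a'|s)| ≤ M, with all probabilities strictly positive. Define for a policy π: g(π) = E_{s∼d} E_{a⁺∼π_h(s), a⁻∼π_n(s)}[ −log σ( β(log π(a⁺|s) − log π(a⁻|s)) ) ], where σ is the sigmoid and β > 0. Then E_{s∼d} D_TV(π_h(·|s), π_n(·|s)) ≤ sqrt( (g(π_n) − g(π_h))/(2β) + βM²/8 ). -/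
open Finset

noncomputable def tvDist {X : Type*} [Fintype X] (P Q : X → ℝ) : ℝ :=
  (∑ x, |P x - Q x|) / 2

/-- The ideal-pair preference loss of a policy `π`. -/
noncomputable def gLoss {S A : Type*} [Fintype S] [Fintype A]
    (d : S → ℝ) (πh πn : S → A → ℝ) (β : ℝ) (π : S → A → ℝ) : ℝ :=
  ∑ s, d s * ∑ ap, ∑ an, πh s ap * πn s an *
    (-(Real.log (sigmoid (β * (Real.log (π s ap) - Real.log (π s an))))))

lemma neg_log_sigmoid (x : ℝ) : -Real.log (sigmoid x) = Real.log (1 + Real.exp (-x)) := by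
  have h : (0:ℝ) < 1 + Real.exp (-x) := by positivity
  rw [sigmoid, Real.log_div one_ne_zero (ne_of_gt h), Real.log_one]
  ring

lemma sigmoid_lb (x : ℝ) : Real.log 2 - x/2 ≤ -Real.log (sigmoid x) := by
  rw [neg_log_sigmoid]
  have h2 : Real.log 2 - x/2 = Real.log (2 * Real.exp (-(x/2))) := by
    rw [Real.log_mul two_ne_zero (Real.exp_ne_zero _), Real.log_exp]; ring
  rw [h2]
  apply Real.log_le_log (by positivity)
  have e2 : Real.exp (-(x/2)) * Real.exp (-(x/2)) = Real.exp (-x) := by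
    rw [← Real.exp_add]; ring_nf
  nlinarith [sq_nonneg (1 - Real.exp (-(x/2)))]

lemma sigmoid_ub (x : ℝ) : -Real.log (sigmoid x) ≤ Real.log 2 - x/2 + x^2/8 := by
  rw [neg_log_sigmoid]
  have hrhs : Real.log 2 - x/2 + x^2/8
      = Real.log (2 * Real.exp (-(x/2)) * Real.exp (x^2/8)) := by
    rw [Real.log_mul (by positivity) (Real.exp_ne_zero _),
      Real.log_mul two_ne_zero (Real.exp_ne_zero _), Real.log_exp, Real.log_exp]
    ring
  rw [hrhs]
  apply Real.log_le_log (by positivity)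
  have hc : Real.cosh (x/2) ≤ Real.exp (x^2/8) := by
    have h := Real.cosh_le_exp_half_sq (x/2)
    have : (x/2)^2/2 = x^2/8 := by ring
    rwa [this] at h
  have hcosh : Real.cosh (x/2) = (Real.exp (x/2) + Real.exp (-(x/2)))/2 := by
    rw [Real.cosh_eq]
  have e1 : Real.exp (-(x/2)) * Real.exp (x/2) = 1 := by
    rw [← Real.exp_add]; norm_num
  have e2 : Real.exp (-(x/2)) * Real.exp (-(x/2)) = Real.exp (-x) := by
    rw [← Real.exp_add]; ring_nf
  nlinarith [Real.exp_pos (-(x/2)),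
    mul_le_mul_of_nonneg_left hc (Real.exp_pos (-(x/2))).le]

lemma log_key {t : ℝ} (ht : 1 ≤ t) : 2*(t-1) ≤ (t+1) * Real.log t := by
  set f : ℝ → ℝ := fun x => (x+1) * Real.log x - 2*(x-1) with hf
  have hder : ∀ x ∈ Set.Ioi (1:ℝ), HasDerivAt f (Real.log x + (x+1) * x⁻¹ - 2) x := by
    intro x hx
    have hx0 : x ≠ 0 := by
      have : (1:ℝ) < x := hx
      linarith
    have h1 : HasDerivAt (fun y : ℝ => (y+1) * Real.log y)
        (1 * Real.log x + (x+1) * x⁻¹) x :=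
      HasDerivAt.mul ((hasDerivAt_id x).add_const 1) (Real.hasDerivAt_log hx0)
    have h2 : HasDerivAt (fun y : ℝ => 2*(y-1)) 2 x := by
      simpa using ((hasDerivAt_id x).sub_const 1).const_mul 2
    rw [one_mul] at h1
    exact h1.sub h2
  have hmono : MonotoneOn f (Set.Ici 1) := by
    apply monotoneOn_of_deriv_nonneg (convex_Ici 1)
    · apply ContinuousOn.sub
      · apply ContinuousOn.mul (by fun_prop)
        apply Real.continuousOn_log.mono
        intro x hx
        simp only [Set.mem_Ici] at hx
        simp only [Set.mem_compl_iff, Set.mem_singleton_iff]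
        intro h; rw [h] at hx; linarith
      · fun_prop
    · rw [interior_Ici]
      intro x hx
      exact (hder x hx).differentiableAt.differentiableWithinAt
    · rw [interior_Ici]
      intro x hx
      rw [(hder x hx).deriv]
      have hx1 : (1:ℝ) < x := hx
      have hlog : 1 - x⁻¹ ≤ Real.log x := Real.one_sub_inv_le_log_of_pos (by linarith)
      have hxinv : (x+1)*x⁻¹ = 1 + x⁻¹ := by field_simp
      rw [hxinv]; linarith
  have h0 : f 1 = 0 := by simp [hf]
  have := hmono (Set.mem_Ici.2 le_rfl) (Set.mem_Ici.2 ht) ht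
  rw [h0] at this
  simp only [hf] at this
  linarith

lemma log_key2 {p q : ℝ} (hp : 0 < p) (hq : 0 < q) (h : q ≤ p) :
    2*(p-q) ≤ (p+q) * (Real.log p - Real.log q) := by
  have ht : 1 ≤ p/q := (one_le_div hq).2 h
  have hk := log_key ht
  rw [Real.log_div hp.ne' hq.ne'] at hk
  have := mul_le_mul_of_nonneg_right hk hq.le
  have hpq : p/q * q = p := div_mul_cancel₀ p hq.ne'
  nlinarith

lemma scalar_sym {p q : ℝ} (hp : 0 < p) (hq : 0 < q) :
    2*(p-q)^2/(p+q) ≤ (p-q) * (Real.log p - Real.log q) := by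
  have hpq : 0 < p + q := by linarith
  rw [div_le_iff₀ hpq]
  rcases le_total q p with h | h
  · have hk := log_key2 hp hq h
    nlinarith [mul_le_mul_of_nonneg_left hk (sub_nonneg.2 h)]
  · have hk := log_key2 hq hp h
    nlinarith [mul_le_mul_of_nonneg_left hk (sub_nonneg.2 h)]

lemma pinsker_sym {A : Type*} [Fintype A] (p q : A → ℝ) (hp : ∀ a, 0 < p a)
    (hq : ∀ a, 0 < q a) (hp1 : ∑ a, p a = 1) (hq1 : ∑ a, q a = 1) :
    (∑ a, |p a - q a|)^2 ≤ ∑ a, (p a - q a) * (Real.log (p a) - Real.log (q a)) := by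
  have hpq : ∀ a, 0 < p a + q a := fun a => add_pos (hp a) (hq a)
  have cs := Finset.sum_mul_sq_le_sq_mul_sq Finset.univ
    (fun a => Real.sqrt (p a + q a)) (fun a => |p a - q a| / Real.sqrt (p a + q a))
  have h1 : ∑ a, Real.sqrt (p a + q a) * (|p a - q a| / Real.sqrt (p a + q a))
      = ∑ a, |p a - q a| := by
    apply Finset.sum_congr rfl
    intro a _
    rw [mul_div_cancel₀]
    exact (Real.sqrt_pos.2 (hpq a)).ne'
  have h2 : ∑ a, (Real.sqrt (p a + q a))^2 = 2 := by
    have : ∀ a ∈ Finset.univ, (Real.sqrt (p a + q a))^2 = p a + q a := by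
      intro a _; exact Real.sq_sqrt (hpq a).le
    rw [Finset.sum_congr rfl this, Finset.sum_add_distrib, hp1, hq1]
    norm_num
  have h3 : ∑ a, (|p a - q a| / Real.sqrt (p a + q a))^2
      = ∑ a, (p a - q a)^2 / (p a + q a) := by
    apply Finset.sum_congr rfl
    intro a _
    rw [div_pow, sq_abs, Real.sq_sqrt (hpq a).le]
  rw [h1, h2, h3] at cs
  calc (∑ a, |p a - q a|)^2 ≤ 2 * ∑ a, (p a - q a)^2 / (p a + q a) := cs
    _ = ∑ a, 2 * (p a - q a)^2 / (p a + q a) := by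
        rw [Finset.mul_sum]
        exact Finset.sum_congr rfl fun a _ => by ring
    _ ≤ ∑ a, (p a - q a) * (Real.log (p a) - Real.log (q a)) :=
        Finset.sum_le_sum fun a _ => scalar_sym (hp a) (hq a)

theorem tv_le_sqrt_of_pref_gap {S A : Type*} [Fintype S] [Fintype A]
    (d : S → ℝ) (πh πn : S → A → ℝ) (β M : ℝ) (hβ : 0 < β)
    (hd0 : ∀ s, 0 ≤ d s) (hd1 : ∑ s, d s = 1)
    (hh0 : ∀ s a, 0 < πh s a) (hn0 : ∀ s a, 0 < πn s a)
    (hh1 : ∀ s, ∑ a, πh s a = 1) (hn1 : ∀ s, ∑ a, πn s a = 1)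
    (hhM : ∀ s a a', |Real.log (πh s a) - Real.log (πh s a')| ≤ M)
    (hnM : ∀ s a a', |Real.log (πn s a) - Real.log (πn s a')| ≤ M) :
    ∑ s, d s * tvDist (πh s) (πn s) ≤
      Real.sqrt ((gLoss d πh πn β πn - gLoss d πh πn β πh) / (2 * β) + β * M ^ 2 / 8) := by
  classical
  -- notation
  set c : S → A → ℝ := fun s a => Real.log (πh s a) - Real.log (πn s a) with hc
  set K : S → ℝ := fun s => ∑ a, (πh s a - πn s a) * (Real.log (πh s a) - Real.log (πn s a))
    with hK
  -- the inner double sum identity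
  have wsum : ∀ s, ∑ ap, ∑ an, πh s ap * πn s an = 1 := by
    intro s
    rw [← Finset.sum_mul_sum Finset.univ Finset.univ (πh s) (πn s), hh1 s, hn1 s, one_mul]
  have inner_eq : ∀ s, (∑ ap, ∑ an, πh s ap * πn s an * (c s ap - c s an)) = K s := by
    intro s
    have h1 : ∀ ap, ∑ an, πh s ap * πn s an * (c s ap - c s an)
        = πh s ap * c s ap - πh s ap * (∑ an, πn s an * c s an) := by
      intro ap
      calc ∑ an, πh s ap * πn s an * (c s ap - c s an)
          = ∑ an, (πh s ap * c s ap * πn s an - πh s ap * (πn s an * c s an)) :=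
            Finset.sum_congr rfl fun an _ => by ring
        _ = πh s ap * c s ap * (∑ an, πn s an) - πh s ap * ∑ an, πn s an * c s an := by
            rw [Finset.sum_sub_distrib, ← Finset.mul_sum, ← Finset.mul_sum]
        _ = πh s ap * c s ap - πh s ap * (∑ an, πn s an * c s an) := by
            rw [hn1 s, mul_one]
    calc (∑ ap, ∑ an, πh s ap * πn s an * (c s ap - c s an))
        = ∑ ap, (πh s ap * c s ap - πh s ap * (∑ an, πn s an * c s an)) :=
          Finset.sum_congr rfl fun ap _ => h1 ap
      _ = (∑ ap, πh s ap * c s ap) - (∑ ap, πh s ap) * (∑ an, πn s an * c s an) := by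
          rw [Finset.sum_sub_distrib, ← Finset.sum_mul]
      _ = (∑ ap, πh s ap * c s ap) - (∑ an, πn s an * c s an) := by
          rw [hh1 s, one_mul]
      _ = K s := by
          rw [hK, ← Finset.sum_sub_distrib]
          exact Finset.sum_congr rfl fun a _ => by simp only [hc]; ring
  -- per-state inequality on inner sums
  have step1 : ∀ s,
      β/2 * K s - β^2 * M^2/8 ≤
        (∑ ap, ∑ an, πh s ap * πn s an *
            (-(Real.log (sigmoid (β * (Real.log (πn s ap) - Real.log (πn s an))))))) -
        (∑ ap, ∑ an, πh s ap * πn s an *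
            (-(Real.log (sigmoid (β * (Real.log (πh s ap) - Real.log (πh s an))))))) := by
    intro s
    have hpoint : ∀ ap an,
        πh s ap * πn s an * (β * (c s ap - c s an)/2 - β^2 * M^2/8) ≤
          πh s ap * πn s an *
            ((-(Real.log (sigmoid (β * (Real.log (πn s ap) - Real.log (πn s an)))))) -
             (-(Real.log (sigmoid (β * (Real.log (πh s ap) - Real.log (πh s an))))))) := by
      intro ap an
      apply mul_le_mul_of_nonneg_left _ (mul_nonneg (hh0 s ap).le (hn0 s an).le)
      have hlb := sigmoid_lb (β * (Real.log (πn s ap) - Real.log (πn s an)))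
      have hub := sigmoid_ub (β * (Real.log (πh s ap) - Real.log (πh s an)))
      have hsq : (β * (Real.log (πh s ap) - Real.log (πh s an)))^2 ≤ β^2 * M^2 := by
        have h := hhM s ap an
        have h2 : (Real.log (πh s ap) - Real.log (πh s an))^2 ≤ M^2 := by
          rcases abs_le.1 h with ⟨h1, h2⟩
          nlinarith
        calc (β * (Real.log (πh s ap) - Real.log (πh s an)))^2
            = β^2 * (Real.log (πh s ap) - Real.log (πh s an))^2 := by ring
          _ ≤ β^2 * M^2 := by nlinarith [sq_nonneg β]
      simp only [hc]
      nlinarith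
    calc β/2 * K s - β^2 * M^2/8
        = ∑ ap, ∑ an, πh s ap * πn s an * (β * (c s ap - c s an)/2 - β^2 * M^2/8) := by
          have e1 : ∑ ap, ∑ an, πh s ap * πn s an * (β * (c s ap - c s an)/2)
              = β/2 * K s := by
            rw [← inner_eq s, Finset.mul_sum]
            refine Finset.sum_congr rfl fun ap _ => ?_
            rw [Finset.mul_sum]
            exact Finset.sum_congr rfl fun an _ => by ring
          have e2 : ∑ ap, ∑ an, πh s ap * πn s an * (β^2 * M^2/8) = β^2 * M^2/8 := by
            simp only [← Finset.sum_mul]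
            rw [wsum s, one_mul]
          calc β/2 * K s - β^2 * M^2/8
              = (∑ ap, ∑ an, πh s ap * πn s an * (β * (c s ap - c s an)/2)) -
                ∑ ap, ∑ an, πh s ap * πn s an * (β^2 * M^2/8) := by rw [e1, e2]
            _ = ∑ ap, ∑ an, πh s ap * πn s an * (β * (c s ap - c s an)/2 - β^2 * M^2/8) := by
                simp only [mul_sub, ← Finset.sum_sub_distrib]
      _ ≤ ∑ ap, ∑ an, πh s ap * πn s an *
            ((-(Real.log (sigmoid (β * (Real.log (πn s ap) - Real.log (πn s an)))))) -
             (-(Real.log (sigmoid (β * (Real.log (πh s ap) - Real.log (πh s an))))))) :=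
          Finset.sum_le_sum fun ap _ => Finset.sum_le_sum fun an _ => hpoint ap an
      _ = _ := by
          simp only [mul_sub, Finset.sum_sub_distrib]
  -- global: gap lower bound
  have gap_lb : β/2 * (∑ s, d s * K s) - β^2 * M^2/8 ≤
      gLoss d πh πn β πn - gLoss d πh πn β πh := by
    rw [gLoss, gLoss, ← Finset.sum_sub_distrib]
    calc β/2 * (∑ s, d s * K s) - β^2 * M^2/8
        = ∑ s, d s * (β/2 * K s - β^2 * M^2/8) := by
          have eA : ∑ s, d s * (β/2 * K s - β^2 * M^2/8)
              = β/2 * (∑ s, d s * K s) - β^2 * M^2/8 * (∑ s, d s) := by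
            rw [Finset.mul_sum, Finset.mul_sum, ← Finset.sum_sub_distrib]
            exact Finset.sum_congr rfl fun s _ => by ring
          rw [eA, hd1, mul_one]
      _ ≤ ∑ s, d s * ((∑ ap, ∑ an, πh s ap * πn s an *
            (-(Real.log (sigmoid (β * (Real.log (πn s ap) - Real.log (πn s an))))))) -
          (∑ ap, ∑ an, πh s ap * πn s an *
            (-(Real.log (sigmoid (β * (Real.log (πh s ap) - Real.log (πh s an))))))) ) :=
          Finset.sum_le_sum fun s _ => mul_le_mul_of_nonneg_left (step1 s) (hd0 s)
      _ = _ := Finset.sum_congr rfl fun s _ => by ring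
  -- per-state Pinsker
  have tv_sq : ∀ s, (tvDist (πh s) (πn s))^2 ≤ K s / 4 := by
    intro s
    have h := pinsker_sym (πh s) (πn s) (hh0 s) (hn0 s) (hh1 s) (hn1 s)
    rw [tvDist]
    rw [div_pow]
    rw [div_le_div_iff₀ (by norm_num) (by norm_num)]
    simp only [hK]
    nlinarith
  -- Jensen / Cauchy-Schwarz on states
  have tv_nonneg : ∀ s, 0 ≤ tvDist (πh s) (πn s) := by
    intro s
    rw [tvDist]
    positivity
  have jensen : (∑ s, d s * tvDist (πh s) (πn s))^2
      ≤ ∑ s, d s * (tvDist (πh s) (πn s))^2 := by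
    have cs := Finset.sum_mul_sq_le_sq_mul_sq Finset.univ
      (fun s => Real.sqrt (d s)) (fun s => Real.sqrt (d s) * tvDist (πh s) (πn s))
    have h1 : ∑ s, Real.sqrt (d s) * (Real.sqrt (d s) * tvDist (πh s) (πn s))
        = ∑ s, d s * tvDist (πh s) (πn s) := by
      refine Finset.sum_congr rfl fun s _ => ?_
      rw [← mul_assoc, Real.mul_self_sqrt (hd0 s)]
    have h2 : ∑ s, (Real.sqrt (d s))^2 = 1 := by
      rw [Finset.sum_congr rfl fun s _ => Real.sq_sqrt (hd0 s), hd1]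
    have h3 : ∑ s, (Real.sqrt (d s) * tvDist (πh s) (πn s))^2
        = ∑ s, d s * (tvDist (πh s) (πn s))^2 := by
      refine Finset.sum_congr rfl fun s _ => ?_
      rw [mul_pow, Real.sq_sqrt (hd0 s)]
    rw [h1, h2, h3, one_mul] at cs
    exact cs
  -- assemble
  have key : (∑ s, d s * tvDist (πh s) (πn s))^2 ≤
      (gLoss d πh πn β πn - gLoss d πh πn β πh) / (2 * β) + β * M ^ 2 / 8 := by
    have h4 : ∑ s, d s * (tvDist (πh s) (πn s))^2 ≤ (∑ s, d s * K s) / 4 := by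
      rw [Finset.sum_div]
      refine Finset.sum_le_sum fun s _ => ?_
      calc d s * (tvDist (πh s) (πn s))^2 ≤ d s * (K s / 4) :=
            mul_le_mul_of_nonneg_left (tv_sq s) (hd0 s)
        _ = d s * K s / 4 := by ring
    have h5 : (∑ s, d s * K s) / 4 ≤
        (gLoss d πh πn β πn - gLoss d πh πn β πh) / (2 * β) + β * M ^ 2 / 8 := by
      have h2b : (0:ℝ) < 2*β := by linarith
      have h6 : (β/2 * (∑ s, d s * K s) - β^2*M^2/8)/(2*β) ≤
          (gLoss d πh πn β πn - gLoss d πh πn β πh) / (2*β) :=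
        (div_le_div_iff_of_pos_right h2b).2 gap_lb
      have h7 : (β/2 * (∑ s, d s * K s) - β^2*M^2/8)/(2*β)
          = (∑ s, d s * K s)/4 - β*M^2/16 := by
        field_simp
        ring
      have h8 : 0 ≤ β*M^2 := mul_nonneg hβ.le (sq_nonneg M)
      linarith
    linarith [jensen, h4, h5]
  have hL : 0 ≤ ∑ s, d s * tvDist (πh s) (πn s) :=
    Finset.sum_nonneg fun s _ => mul_nonneg (hd0 s) (tv_nonneg s)
  rw [Real.le_sqrt hL (le_trans (sq_nonneg _) key)]
  exact key
end

section
/- Let S and A be finite sets, and let π_h, π_n be policies (mappings from S to probability distributions on A) whose log-probabilities have per-state oscillation at most M, i.e., |log π(a|s) − log π(a'|s)| ≤ M for π ∈ {π_h, π_n} and all s,a,a'. Let d be a distribution on S, and for each s let ρ_ideal^s(a⁺,a⁻) = π_h(a⁺|s)π_n(a⁻|s) and ρ_pref^s be an arbitrary distribution on A×A with δ_pref = E_{s∼d} D_TV(ρ_ideal^s, ρ_pref^s). Define ℓ^π(s,a⁺,a⁻) = −log σ(β(log π(a⁺|s) − log π(a⁻|s))), L(π) = E_{s∼d} E_{(a⁺,a⁻)∼ρ_pref^s}[ℓ^π(s,a⁺,a⁻)],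 g(π) = E_{s∼d} E_{(a⁺,a⁻)∼ρ_ideal^s}[ℓ^π(s,a⁺,a⁻)], and ε = L(π_n) − L(π_h). Then g(π_n) − g(π_h) ≤ ε + 4(βM + log 2)·δ_pref. -/
open Finset

/-- Per-pair preference loss for policy `π`. -/
noncomputable def prefLoss {S A : Type*} (β : ℝ) (π : S → A → ℝ)
    (s : S) (ap an : A) : ℝ :=
  -(Real.log (sigmoid (β * (Real.log (π s ap) - Real.log (π s an)))))

lemma prefLoss_abs_le {S A : Type*} (β M : ℝ) (π : S → A → ℝ) (s : S) (ap an : A)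
    (hβ : 0 < β) (hM : |Real.log (π s ap) - Real.log (π s an)| ≤ M) :
    |prefLoss β π s ap an| ≤ β * M + Real.log 2 := by
  set x := β * (Real.log (π s ap) - Real.log (π s an)) with hxdef
  have hx : |x| ≤ β * M := by
    rw [hxdef, abs_mul, abs_of_pos hβ]
    exact mul_le_mul_of_nonneg_left hM hβ.le
  have hexp : 0 < Real.exp (-x) := Real.exp_pos _
  have hpos : (0:ℝ) < 1 + Real.exp (-x) := by linarith
  have hloss : prefLoss β π s ap an = Real.log (1 + Real.exp (-x)) := by
    rw [prefLoss, ← hxdef, sigmoid, one_div, Real.log_inv, neg_neg]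
  rw [hloss]
  have h0 : 0 ≤ Real.log (1 + Real.exp (-x)) := Real.log_nonneg (by linarith)
  rw [abs_of_nonneg h0]
  have hub : 1 + Real.exp (-x) ≤ 2 * Real.exp (β * M) := by
    have h1 : Real.exp (-x) ≤ Real.exp (β * M) :=
      Real.exp_le_exp.mpr (le_trans (neg_le_abs x) hx)
    have h2 : (1:ℝ) ≤ Real.exp (β * M) :=
      Real.one_le_exp (le_trans (abs_nonneg x) hx)
    linarith
  calc Real.log (1 + Real.exp (-x)) ≤ Real.log (2 * Real.exp (β * M)) :=
        Real.log_le_log hpos hub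
    _ = Real.log 2 + β * M := by
        rw [Real.log_mul two_ne_zero (Real.exp_ne_zero _), Real.log_exp]
    _ = β * M + Real.log 2 := by ring

lemma state_bound {X : Type*} [Fintype X] (P Q : X → ℝ) (f : X → ℝ) (C : ℝ)
    (hf : ∀ p, |f p| ≤ C) :
    |∑ p, P p * f p - ∑ p, Q p * f p| ≤ 2 * C * tvDist P Q := by
  have h1 : ∑ p, P p * f p - ∑ p, Q p * f p = ∑ p, (P p - Q p) * f p := by
    rw [← Finset.sum_sub_distrib]; congr 1; ext p; ring
  rw [h1, tvDist]
  calc |∑ p, (P p - Q p) * f p| ≤ ∑ p, |(P p - Q p) * f p| :=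
        Finset.abs_sum_le_sum_abs _ _
    _ ≤ ∑ p, |P p - Q p| * C := by
        refine Finset.sum_le_sum fun p _ => ?_
        rw [abs_mul]
        exact mul_le_mul_of_nonneg_left (hf p) (abs_nonneg _)
    _ = 2 * C * ((∑ p, |P p - Q p|) / 2) := by
        rw [← Finset.sum_mul]; ring

theorem pref_gap_bound {S A : Type*} [Fintype S] [Fintype A]
    (d : S → ℝ) (πh πn : S → A → ℝ) (ρpref : S → A × A → ℝ) (β M : ℝ)
    (hβ : 0 < β)
    (hd0 : ∀ s, 0 ≤ d s) (hd1 : ∑ s, d s = 1)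
    (hh0 : ∀ s a, 0 < πh s a) (hn0 : ∀ s a, 0 < πn s a)
    (hh1 : ∀ s, ∑ a, πh s a = 1) (hn1 : ∀ s, ∑ a, πn s a = 1)
    (hp0 : ∀ s p, 0 ≤ ρpref s p) (hp1 : ∀ s, ∑ p, ρpref s p = 1)
    (hhM : ∀ s a a', |Real.log (πh s a) - Real.log (πh s a')| ≤ M)
    (hnM : ∀ s a a', |Real.log (πn s a) - Real.log (πn s a')| ≤ M) :
    -- g(π) uses ideal pairs ρ_ideal^s(a⁺,a⁻) = π_h(a⁺|s)π_n(a⁻|s),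
    -- L(π) uses the empirical pairs ρ_pref^s,
    -- δ_pref = E_{s∼d} D_TV(ρ_ideal^s, ρ_pref^s), ε = L(π_n) − L(π_h).
    (∑ s, d s * ∑ ap, ∑ an, πh s ap * πn s an * prefLoss β πn s ap an) -
      (∑ s, d s * ∑ ap, ∑ an, πh s ap * πn s an * prefLoss β πh s ap an) ≤
    ((∑ s, d s * ∑ p : A × A, ρpref s p * prefLoss β πn s p.1 p.2) -
      (∑ s, d s * ∑ p : A × A, ρpref s p * prefLoss β πh s p.1 p.2)) +
    4 * (β * M + Real.log 2) *
      ∑ s, d s * tvDist (fun p : A × A => πh s p.1 * πn s p.2) (ρpref s) := by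
  set C := β * M + Real.log 2 with hCdef
  have key : ∀ (s : S) (π : S → A → ℝ),
      (∀ a a', |Real.log (π s a) - Real.log (π s a')| ≤ M) →
      |(∑ ap, ∑ an, πh s ap * πn s an * prefLoss β π s ap an) -
        ∑ p : A × A, ρpref s p * prefLoss β π s p.1 p.2| ≤
      2 * C * tvDist (fun p : A × A => πh s p.1 * πn s p.2) (ρpref s) := by
    intro s π hMs
    have hdsum : (∑ ap, ∑ an, πh s ap * πn s an * prefLoss β π s ap an)
        = ∑ p : A × A, (πh s p.1 * πn s p.2) * prefLoss β π s p.1 p.2 :=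
      (Fintype.sum_prod_type
        (fun p : A × A => πh s p.1 * πn s p.2 * prefLoss β π s p.1 p.2)).symm
    rw [hdsum]
    exact state_bound _ _ _ _ (fun p => prefLoss_abs_le β M π s p.1 p.2 hβ (hMs p.1 p.2))
  have hstep : ∀ s : S,
      d s * (∑ ap, ∑ an, πh s ap * πn s an * prefLoss β πn s ap an)
      - d s * (∑ ap, ∑ an, πh s ap * πn s an * prefLoss β πh s ap an)
      ≤ (d s * ∑ p : A × A, ρpref s p * prefLoss β πn s p.1 p.2
         - d s * ∑ p : A × A, ρpref s p * prefLoss β πh s p.1 p.2)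
        + 4 * C * (d s * tvDist (fun p : A × A => πh s p.1 * πn s p.2) (ρpref s)) := by
    intro s
    have h1 := (abs_le.mp (key s πn (hnM s))).2
    have h2 := (abs_le.mp (key s πh (hhM s))).1
    have hd := hd0 s
    nlinarith [mul_le_mul_of_nonneg_left h1 hd, mul_le_mul_of_nonneg_left h2 hd]
  calc (∑ s, d s * ∑ ap, ∑ an, πh s ap * πn s an * prefLoss β πn s ap an) -
      (∑ s, d s * ∑ ap, ∑ an, πh s ap * πn s an * prefLoss β πh s ap an)
      = ∑ s, (d s * (∑ ap, ∑ an, πh s ap * πn s an * prefLoss β πn s ap an)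
          - d s * (∑ ap, ∑ an, πh s ap * πn s an * prefLoss β πh s ap an)) :=
        (Finset.sum_sub_distrib _ _).symm
    _ ≤ ∑ s, ((d s * ∑ p : A × A, ρpref s p * prefLoss β πn s p.1 p.2
         - d s * ∑ p : A × A, ρpref s p * prefLoss β πh s p.1 p.2)
        + 4 * C * (d s * tvDist (fun p : A × A => πh s p.1 * πn s p.2) (ρpref s))) :=
        Finset.sum_le_sum fun s _ => hstep s
    _ = _ := by
        rw [Finset.sum_add_distrib, Finset.sum_sub_distrib, ← Finset.mul_sum]
end

section
/- Let S, A be finite, π_h, π_n policies, Q* the Q-function of π_h with |Q*(s,a) − Q*(s,a')| ≤ U for all s,a,a', d_{π_n} the discounted occupancy measure of π_n, and d_pref any probability distribution on S with δ_dist = D_TV(d_{π_n}, d_pref). Then J(π_h) − J(π_n) ≤ (U/(1−γ)) · ( E_{s∼d_pref} D_TV(π_h(·|s), π_n(·|s)) + 2δ_dist ). -/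
set_option linter.unusedSectionVars false


open Finset

section MDP

variable {S A : Type*} [Fintype S] [Fintype A]

/-- `visit P π d0 t s` is the probability of being in state `s` at time `t`
when following policy `π` in the MDP with transition kernel `P`, starting
from the initial state distribution `d0`. -/
noncomputable def visit (P : S → A → S → ℝ) (π : S → A → ℝ) (d0 : S → ℝ) :
    ℕ → S → ℝ
  | 0 => d0
  | (t + 1) => fun s' => ∑ s, ∑ a, visit P π d0 t s * π s a * P s a s'

/-- Expected discounted return of policy `π` from initial distribution `d0`:
`J(π) = E_{τ∼P_π}[∑_t γ^t r(s_t,a_t)]`. -/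
noncomputable def Jval (P : S → A → S → ℝ) (r : S → A → ℝ) (γ : ℝ)
    (π : S → A → ℝ) (d0 : S → ℝ) : ℝ :=
  ∑' t : ℕ, γ ^ t * ∑ s, ∑ a, visit P π d0 t s * π s a * r s a

/-- Q-function of policy `π`:
`Q^π(s,a) = E[∑_t γ^t r(s_t,a_t) | s_0 = s, a_0 = a]` under `π`. -/
noncomputable def Qfun (P : S → A → S → ℝ) (r : S → A → ℝ) (γ : ℝ)
    (π : S → A → ℝ) (s : S) (a : A) : ℝ :=
  r s a + ∑' t : ℕ, γ ^ (t + 1) *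
    ∑ s', ∑ a', visit P π (P s a) t s' * π s' a' * r s' a'

/-- Discounted state occupancy `d_π(s) = (1−γ) ∑_t γ^t Pr[s_t = s]`. -/
noncomputable def dOcc (P : S → A → S → ℝ) (γ : ℝ) (π : S → A → ℝ)
    (d0 : S → ℝ) (s : S) : ℝ :=
  (1 - γ) * ∑' t : ℕ, γ ^ t * visit P π d0 t s

end MDP

section Aux

open scoped Classical

variable {S A : Type*} [Fintype S] [Fintype A]
variable (P : S → A → S → ℝ) (r : S → A → ℝ) (γ : ℝ) (π : S → A → ℝ)

/-- point mass -/
noncomputable def dlt (s0 : S) : S → ℝ := fun s => if s = s0 then 1 else 0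

/-- one-step distribution pushforward -/
noncomputable def stepD (d : S → ℝ) : S → ℝ :=
  fun s' => ∑ s, ∑ a, d s * π s a * P s a s'

lemma visit_succ (d : S → ℝ) (t : ℕ) (s' : S) :
    visit P π d (t + 1) s' = ∑ s, ∑ a, visit P π d t s * π s a * P s a s' := rfl

variable {P π}

lemma visit_nonneg (hP0 : ∀ s a s', 0 ≤ P s a s') (hπ0 : ∀ s a, 0 ≤ π s a)
    {d : S → ℝ} (hd : ∀ s, 0 ≤ d s) (t : ℕ) (s : S) :
    0 ≤ visit P π d t s := by
  induction t generalizing s with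
  | zero => exact hd s
  | succ t ih =>
    rw [visit_succ]
    exact Finset.sum_nonneg fun s' _ => Finset.sum_nonneg fun a _ =>
      mul_nonneg (mul_nonneg (ih s') (hπ0 s' a)) (hP0 s' a _)

lemma visit_sum_one (hP1 : ∀ s a, ∑ s', P s a s' = 1) (hπ1 : ∀ s, ∑ a, π s a = 1)
    {d : S → ℝ} (hd : ∑ s, d s = 1) (t : ℕ) :
    ∑ s, visit P π d t s = 1 := by
  induction t with
  | zero => exact hd
  | succ t ih =>
    simp only [visit_succ]
    rw [Finset.sum_comm]
    calc ∑ s, ∑ s', ∑ a, visit P π d t s * π s a * P s a s'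
        = ∑ s, ∑ a, ∑ s', visit P π d t s * π s a * P s a s' := by
          congr 1; ext s; rw [Finset.sum_comm]
      _ = ∑ s, visit P π d t s := by
          congr 1; ext s
          simp only [← Finset.mul_sum, hP1, mul_one, ← Finset.mul_sum, hπ1]
      _ = 1 := ih

lemma visit_le_one (hP0 : ∀ s a s', 0 ≤ P s a s') (hP1 : ∀ s a, ∑ s', P s a s' = 1)
    (hπ0 : ∀ s a, 0 ≤ π s a) (hπ1 : ∀ s, ∑ a, π s a = 1) {d : S → ℝ} (hd0 : ∀ s, 0 ≤ d s) (hd1 : ∑ s, d s = 1)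
    (t : ℕ) (s : S) : visit P π d t s ≤ 1 := by
  have h := visit_sum_one (π := π) (P := P) hP1 hπ1 hd1 t
  calc visit P π d t s ≤ ∑ s', visit P π d t s' :=
        Finset.single_le_sum (fun s' _ => visit_nonneg hP0 hπ0 hd0 t s') (Finset.mem_univ s)
    _ = 1 := h


/-- bound on the per-step expected reward -/
lemma inner_abs_le (hP0 : ∀ s a s', 0 ≤ P s a s') (hP1 : ∀ s a, ∑ s', P s a s' = 1)
    (hπ0 : ∀ s a, 0 ≤ π s a) (hπ1 : ∀ s, ∑ a, π s a = 1)
    {d : S → ℝ} (hd0 : ∀ s, 0 ≤ d s) (hd1 : ∑ s, d s = 1) (t : ℕ) :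
    |∑ s, ∑ a, visit P π d t s * π s a * r s a| ≤ ∑ s, ∑ a, |r s a| := by
  calc |∑ s, ∑ a, visit P π d t s * π s a * r s a|
      ≤ ∑ s, ∑ a, |visit P π d t s * π s a * r s a| := by
        refine (Finset.abs_sum_le_sum_abs _ _).trans ?_
        exact Finset.sum_le_sum fun s _ => Finset.abs_sum_le_sum_abs _ _
    _ ≤ ∑ s, ∑ a, |r s a| := by
        refine Finset.sum_le_sum fun s _ => Finset.sum_le_sum fun a _ => ?_
        rw [abs_mul, abs_mul]
        have h1 : |visit P π d t s| ≤ 1 := by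
          rw [abs_of_nonneg (visit_nonneg hP0 hπ0 hd0 t s)]
          exact visit_le_one hP0 hP1 hπ0 hπ1 hd0 hd1 t s
        have h2 : |π s a| ≤ 1 := by
          rw [abs_of_nonneg (hπ0 s a)]
          calc π s a ≤ ∑ a', π s a' :=
              Finset.single_le_sum (fun a' _ => hπ0 s a') (Finset.mem_univ a)
            _ = 1 := hπ1 s
        calc |visit P π d t s| * |π s a| * |r s a|
            ≤ 1 * 1 * |r s a| := by
              apply mul_le_mul_of_nonneg_right _ (abs_nonneg _)
              exact mul_le_mul h1 h2 (abs_nonneg _) zero_le_one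
          _ = |r s a| := by ring

lemma summable_geom_bound {C : ℝ} (hγ0 : 0 ≤ γ) (hγ1 : γ < 1)
    {u : ℕ → ℝ} (hu : ∀ t, |u t| ≤ C) : Summable (fun t => γ ^ t * u t) := by
  apply Summable.of_norm_bounded
    ((summable_geometric_of_lt_one hγ0 hγ1).mul_left C)
  intro t
  rw [Real.norm_eq_abs, abs_mul, abs_of_nonneg (pow_nonneg hγ0 t), mul_comm]
  exact mul_le_mul_of_nonneg_right (hu t) (pow_nonneg hγ0 t)

/-- summability of the Jval series -/
lemma summable_Jval (hγ0 : 0 ≤ γ) (hγ1 : γ < 1)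
    (hP0 : ∀ s a s', 0 ≤ P s a s') (hP1 : ∀ s a, ∑ s', P s a s' = 1)
    (hπ0 : ∀ s a, 0 ≤ π s a) (hπ1 : ∀ s, ∑ a, π s a = 1)
    {d : S → ℝ} (hd0 : ∀ s, 0 ≤ d s) (hd1 : ∑ s, d s = 1) :
    Summable (fun t => γ ^ t * ∑ s, ∑ a, visit P π d t s * π s a * r s a) := by
  apply summable_geom_bound γ hγ0 hγ1
  intro t
  exact inner_abs_le r hP0 hP1 hπ0 hπ1 hd0 hd1 t

/-- dlt is a distribution -/
lemma dlt_nonneg (s0 s : S) : 0 ≤ dlt s0 s := by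
  unfold dlt; split <;> norm_num

lemma dlt_sum (s0 : S) : ∑ s, dlt s0 s = 1 := by
  unfold dlt; simp

/-- visit is linear in the initial distribution -/
lemma visit_linear (d : S → ℝ) (t : ℕ) (s : S) :
    visit P π d t s = ∑ s0, d s0 * visit P π (dlt s0) t s := by
  induction t generalizing s with
  | zero =>
    simp only [visit, dlt]
    rw [Finset.sum_eq_single s]
    · simp
    · intro b _ hb; simp [Ne.symm hb]
    · intro h; exact absurd (Finset.mem_univ s) h
  | succ t ih =>
    rw [visit_succ]
    calc ∑ s1, ∑ a, visit P π d t s1 * π s1 a * P s1 a s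
        = ∑ s1, ∑ a, ∑ s0, d s0 * visit P π (dlt s0) t s1 * π s1 a * P s1 a s := by
          refine Finset.sum_congr rfl fun s1 _ => Finset.sum_congr rfl fun a _ => ?_
          rw [ih, Finset.sum_mul, Finset.sum_mul]
      _ = ∑ s1, ∑ s0, ∑ a, d s0 * visit P π (dlt s0) t s1 * π s1 a * P s1 a s := by
          exact Finset.sum_congr rfl fun s1 _ => Finset.sum_comm
      _ = ∑ s0, ∑ s1, ∑ a, d s0 * visit P π (dlt s0) t s1 * π s1 a * P s1 a s :=
          Finset.sum_comm
      _ = ∑ s0, d s0 * visit P π (dlt s0) (t + 1) s := by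
          refine Finset.sum_congr rfl fun s0 _ => ?_
          rw [visit_succ, Finset.mul_sum]
          refine Finset.sum_congr rfl fun s1 _ => ?_
          rw [Finset.mul_sum]
          exact Finset.sum_congr rfl fun a _ => by ring


/-- Jval is linear in the initial distribution -/
lemma Jval_linear (hγ0 : 0 ≤ γ) (hγ1 : γ < 1)
    (hP0 : ∀ s a s', 0 ≤ P s a s') (hP1 : ∀ s a, ∑ s', P s a s' = 1)
    (hπ0 : ∀ s a, 0 ≤ π s a) (hπ1 : ∀ s, ∑ a, π s a = 1)
    {d : S → ℝ} (hd0 : ∀ s, 0 ≤ d s) (hd1 : ∑ s, d s = 1) :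
    Jval P r γ π d = ∑ s0, d s0 * Jval P r γ π (dlt s0) := by
  have key : ∀ t : ℕ, γ ^ t * ∑ s, ∑ a, visit P π d t s * π s a * r s a
      = ∑ s0, d s0 * (γ ^ t * ∑ s, ∑ a, visit P π (dlt s0) t s * π s a * r s a) := by
    intro t
    calc γ ^ t * ∑ s, ∑ a, visit P π d t s * π s a * r s a
        = γ ^ t * ∑ s, ∑ a, (∑ s0, d s0 * visit P π (dlt s0) t s) * π s a * r s a := by
          refine congrArg _ (Finset.sum_congr rfl fun s _ =>
            Finset.sum_congr rfl fun a _ => ?_)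
          rw [visit_linear]
      _ = γ ^ t * ∑ s, ∑ a, ∑ s0, d s0 * (visit P π (dlt s0) t s * π s a * r s a) := by
          refine congrArg _ (Finset.sum_congr rfl fun s _ =>
            Finset.sum_congr rfl fun a _ => ?_)
          rw [Finset.sum_mul, Finset.sum_mul]
          exact Finset.sum_congr rfl fun s0 _ => by ring
      _ = γ ^ t * ∑ s, ∑ s0, ∑ a, d s0 * (visit P π (dlt s0) t s * π s a * r s a) := by
          exact congrArg _ (Finset.sum_congr rfl fun s _ => Finset.sum_comm)
      _ = γ ^ t * ∑ s0, ∑ s, ∑ a, d s0 * (visit P π (dlt s0) t s * π s a * r s a) := by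
          exact congrArg _ Finset.sum_comm
      _ = ∑ s0, d s0 * (γ ^ t * ∑ s, ∑ a, visit P π (dlt s0) t s * π s a * r s a) := by
          simp only [Finset.mul_sum]
          refine Finset.sum_congr rfl fun s0 _ => Finset.sum_congr rfl fun s _ =>
            Finset.sum_congr rfl fun a _ => by ring
  unfold Jval
  rw [tsum_congr key, Summable.tsum_finsetSum (fun s0 _ =>
    ((summable_Jval r γ hγ0 hγ1 hP0 hP1 hπ0 hπ1 (dlt_nonneg s0)
      (dlt_sum s0))).mul_left (d s0))]
  exact Finset.sum_congr rfl fun s0 _ => tsum_mul_left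

lemma stepD_nonneg (hP0 : ∀ s a s', 0 ≤ P s a s') (hπ0 : ∀ s a, 0 ≤ π s a)
    {d : S → ℝ} (hd0 : ∀ s, 0 ≤ d s) (s' : S) : 0 ≤ stepD P π d s' :=
  Finset.sum_nonneg fun s _ => Finset.sum_nonneg fun a _ =>
    mul_nonneg (mul_nonneg (hd0 s) (hπ0 s a)) (hP0 s a s')

lemma stepD_sum (hP1 : ∀ s a, ∑ s', P s a s' = 1) (hπ1 : ∀ s, ∑ a, π s a = 1)
    {d : S → ℝ} (hd1 : ∑ s, d s = 1) : ∑ s', stepD P π d s' = 1 := by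
  unfold stepD
  rw [Finset.sum_comm]
  calc ∑ s, ∑ s', ∑ a, d s * π s a * P s a s'
      = ∑ s, ∑ a, ∑ s', d s * π s a * P s a s' :=
        Finset.sum_congr rfl fun s _ => Finset.sum_comm
    _ = 1 := by
        simp only [← Finset.mul_sum, hP1, mul_one, hπ1]
        exact hd1

lemma visit_shift (d : S → ℝ) (t : ℕ) (s : S) :
    visit P π d (t + 1) s = visit P π (stepD P π d) t s := by
  induction t generalizing s with
  | zero => rfl
  | succ t ih => rw [visit_succ]; simp only [ih]; rfl

/-- Bellman equation for Jval -/
lemma Jval_bellman (hγ0 : 0 ≤ γ) (hγ1 : γ < 1)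
    (hP0 : ∀ s a s', 0 ≤ P s a s') (hP1 : ∀ s a, ∑ s', P s a s' = 1)
    (hπ0 : ∀ s a, 0 ≤ π s a) (hπ1 : ∀ s, ∑ a, π s a = 1)
    {d : S → ℝ} (hd0 : ∀ s, 0 ≤ d s) (hd1 : ∑ s, d s = 1) :
    Jval P r γ π d = (∑ s, ∑ a, d s * π s a * r s a)
      + γ * Jval P r γ π (stepD P π d) := by
  unfold Jval
  rw [Summable.tsum_eq_zero_add (summable_Jval r γ hγ0 hγ1 hP0 hP1 hπ0 hπ1 hd0 hd1)]
  simp only [pow_zero, one_mul]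
  have h0 : (∑ s, ∑ a, visit P π d 0 s * π s a * r s a)
      = ∑ s, ∑ a, d s * π s a * r s a := rfl
  rw [h0, ← tsum_mul_left]
  congr 1
  refine tsum_congr fun t => ?_
  simp only [visit_shift]
  ring


lemma Qfun_eq (s : S) (a : A) :
    Qfun P r γ π s a = r s a + γ * Jval P r γ π (P s a) := by
  unfold Qfun Jval
  congr 1
  rw [← tsum_mul_left]
  exact tsum_congr fun t => by ring

/-- key one-step identity: expectation of Q^π under distribution μ and policy ρ -/
lemma pdl_step (hγ0 : 0 ≤ γ) (hγ1 : γ < 1)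
    (hP0 : ∀ s a s', 0 ≤ P s a s') (hP1 : ∀ s a, ∑ s', P s a s' = 1)
    (hπ0 : ∀ s a, 0 ≤ π s a) (hπ1 : ∀ s, ∑ a, π s a = 1)
    (ρ : S → A → ℝ) (μ : S → ℝ) :
    ∑ s, μ s * ∑ a, ρ s a * Qfun P r γ π s a
      = (∑ s, ∑ a, μ s * ρ s a * r s a)
        + γ * ∑ s', stepD P ρ μ s' * Jval P r γ π (dlt s') := by
  have hQ : ∀ s a, Qfun P r γ π s a
      = r s a + γ * ∑ s', P s a s' * Jval P r γ π (dlt s') := by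
    intro s a
    rw [Qfun_eq, Jval_linear r γ hγ0 hγ1 hP0 hP1 hπ0 hπ1 (hP0 s a) (hP1 s a)]
  calc ∑ s, μ s * ∑ a, ρ s a * Qfun P r γ π s a
      = ∑ s, ∑ a, (μ s * ρ s a * r s a
          + ∑ s', γ * (μ s * ρ s a * P s a s' * Jval P r γ π (dlt s'))) := by
        simp only [hQ, Finset.mul_sum, Finset.sum_mul, mul_add]
        refine Finset.sum_congr rfl fun s _ => Finset.sum_congr rfl fun a _ => ?_
        congr 1
        · ring
        · exact Finset.sum_congr rfl fun s' _ => by ring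
    _ = (∑ s, ∑ a, μ s * ρ s a * r s a)
        + ∑ s, ∑ a, ∑ s', γ * (μ s * ρ s a * P s a s' * Jval P r γ π (dlt s')) := by
        simp only [Finset.sum_add_distrib]
    _ = (∑ s, ∑ a, μ s * ρ s a * r s a)
        + γ * ∑ s', stepD P ρ μ s' * Jval P r γ π (dlt s') := by
        congr 1
        unfold stepD
        calc ∑ s, ∑ a, ∑ s', γ * (μ s * ρ s a * P s a s' * Jval P r γ π (dlt s'))
            = ∑ s, ∑ s', ∑ a, γ * (μ s * ρ s a * P s a s' * Jval P r γ π (dlt s')) :=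
              Finset.sum_congr rfl fun s _ => Finset.sum_comm
          _ = ∑ s', ∑ s, ∑ a, γ * (μ s * ρ s a * P s a s' * Jval P r γ π (dlt s')) :=
              Finset.sum_comm
          _ = γ * ∑ s', (∑ s, ∑ a, μ s * ρ s a * P s a s') * Jval P r γ π (dlt s') := by
              simp only [Finset.sum_mul, Finset.mul_sum]

lemma dlt_collapse (s : S) (g : S → ℝ) : ∑ s1, dlt s s1 * g s1 = g s := by
  unfold dlt
  simp

/-- value function: V(s) = ∑_a π(a|s) Q(s,a) -/
lemma V_eq (hγ0 : 0 ≤ γ) (hγ1 : γ < 1)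
    (hP0 : ∀ s a s', 0 ≤ P s a s') (hP1 : ∀ s a, ∑ s', P s a s' = 1)
    (hπ0 : ∀ s a, 0 ≤ π s a) (hπ1 : ∀ s, ∑ a, π s a = 1) (s : S) :
    Jval P r γ π (dlt s) = ∑ a, π s a * Qfun P r γ π s a := by
  have h1 := Jval_bellman r γ hγ0 hγ1 hP0 hP1 hπ0 hπ1 (dlt_nonneg s) (dlt_sum s)
  have h3 := Jval_linear r γ hγ0 hγ1 hP0 hP1 hπ0 hπ1
    (stepD_nonneg hP0 hπ0 (dlt_nonneg s)) (stepD_sum hP1 hπ1 (dlt_sum s))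
  have h2 := pdl_step (P := P) (π := π) r γ hγ0 hγ1 hP0 hP1 hπ0 hπ1 π (dlt s)
  rw [h1, h3, ← h2]
  exact dlt_collapse s _


/-- performance difference lemma -/
lemma pdl_main (hγ0 : 0 < γ) (hγ1 : γ < 1)
    (hP0 : ∀ s a s', 0 ≤ P s a s') (hP1 : ∀ s a, ∑ s', P s a s' = 1)
    (πh πn : S → A → ℝ)
    (hh0 : ∀ s a, 0 ≤ πh s a) (hh1 : ∀ s, ∑ a, πh s a = 1)
    (hn0 : ∀ s a, 0 ≤ πn s a) (hn1 : ∀ s, ∑ a, πn s a = 1)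
    {d0 : S → ℝ} (hd0 : ∀ s, 0 ≤ d0 s) (hd1 : ∑ s, d0 s = 1) :
    Jval P r γ πh d0 - Jval P r γ πn d0
      = ∑ s, (∑' t : ℕ, γ ^ t * visit P πn d0 t s)
          * (∑ a, (πh s a - πn s a) * Qfun P r γ πh s a) := by
  set ν : ℕ → S → ℝ := visit P πn d0 with hν
  set V : S → ℝ := fun s => Jval P r γ πh (dlt s) with hV
  set f : S → ℝ := fun s => ∑ a, (πh s a - πn s a) * Qfun P r γ πh s a with hf
  set b : ℕ → ℝ := fun t => γ ^ t * ∑ s, ν t s * V s with hb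
  set u : ℕ → ℝ := fun t => γ ^ t * ∑ s, ∑ a, ν t s * πn s a * r s a with hu
  have hν0 : ∀ t s, 0 ≤ ν t s := visit_nonneg hP0 hn0 hd0
  have hν1t : ∀ t s, ν t s ≤ 1 := visit_le_one hP0 hP1 hn0 hn1 hd0 hd1
  have habs : ∀ (g : S → ℝ) t, |∑ s, ν t s * g s| ≤ ∑ s, |g s| := by
    intro g t
    refine (Finset.abs_sum_le_sum_abs _ _).trans (Finset.sum_le_sum fun s _ => ?_)
    rw [abs_mul, abs_of_nonneg (hν0 t s)]
    calc ν t s * |g s| ≤ 1 * |g s| :=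
          mul_le_mul_of_nonneg_right (hν1t t s) (abs_nonneg _)
      _ = |g s| := one_mul _
  have hbs : Summable b :=
    summable_geom_bound γ hγ0.le hγ1 (fun t => habs V t)
  have hbs' : Summable (fun t => b (t + 1)) := (summable_nat_add_iff 1).mpr hbs
  have hus : Summable u :=
    summable_Jval (π := πn) r γ hγ0.le hγ1 hP0 hP1 hn0 hn1 hd0 hd1
  have hgs : Summable (fun t => γ ^ t * ∑ s, ν t s * f s) :=
    summable_geom_bound γ hγ0.le hγ1 (fun t => habs f t)
  -- pointwise identity
  have hpoint : ∀ t, γ ^ t * ∑ s, ν t s * f s = b t - b (t + 1) - u t := by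
    intro t
    have hsplit : ∑ s, ν t s * f s
        = (∑ s, ν t s * ∑ a, πh s a * Qfun P r γ πh s a)
          - ∑ s, ν t s * ∑ a, πn s a * Qfun P r γ πh s a := by
      rw [← Finset.sum_sub_distrib]
      refine Finset.sum_congr rfl fun s _ => ?_
      rw [← mul_sub, ← Finset.sum_sub_distrib]
      refine congrArg _ (Finset.sum_congr rfl fun a _ => by ring)
    have h1 : ∑ s, ν t s * ∑ a, πh s a * Qfun P r γ πh s a = ∑ s, ν t s * V s := by
      refine Finset.sum_congr rfl fun s _ => ?_
      exact congrArg (HMul.hMul (ν t s)) (V_eq r γ hγ0.le hγ1 hP0 hP1 hh0 hh1 s).symm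
    have h2 := pdl_step (P := P) (π := πh) r γ hγ0.le hγ1 hP0 hP1 hh0 hh1 πn (ν t)
    have hstep : stepD P πn (ν t) = ν (t + 1) := by
      funext s'
      rfl
    rw [hsplit, h1, h2, hstep]
    simp only [hb, hu, hV]
    ring
  -- sum the telescope
  have hJh : Jval P r γ πh d0 = b 0 := by
    rw [Jval_linear r γ hγ0.le hγ1 hP0 hP1 hh0 hh1 hd0 hd1]
    simp only [hb, pow_zero, one_mul]
    rfl
  have hJn : Jval P r γ πn d0 = ∑' t, u t := by
    unfold Jval
    exact tsum_congr fun t => rfl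
  have htel : ∑' t, (γ ^ t * ∑ s, ν t s * f s)
      = Jval P r γ πh d0 - Jval P r γ πn d0 := by
    have h4 : ∀ t, γ ^ t * ∑ s, ν t s * f s = (b t - b (t + 1)) - u t := by
      intro t; rw [hpoint t]
    rw [tsum_congr h4, Summable.tsum_sub (hbs.sub hbs') hus, Summable.tsum_sub hbs hbs']
    rw [Summable.tsum_eq_zero_add hbs, hJh, hJn]
    ring
  -- swap sums
  have hswap : ∑' t, (γ ^ t * ∑ s, ν t s * f s)
      = ∑ s, (∑' t : ℕ, γ ^ t * ν t s) * f s := by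
    have h5 : ∀ t, γ ^ t * ∑ s, ν t s * f s = ∑ s, γ ^ t * ν t s * f s := by
      intro t
      rw [Finset.mul_sum]
      exact Finset.sum_congr rfl fun s _ => by ring
    rw [tsum_congr h5, Summable.tsum_finsetSum (fun s _ => ?_)]
    · refine Finset.sum_congr rfl fun s _ => ?_
      rw [← tsum_mul_right]
    · refine Summable.mul_right (f s) ?_
      apply summable_geom_bound γ hγ0.le hγ1 (C := 1)
      intro t
      rw [abs_of_nonneg (hν0 t s)]
      exact hν1t t s
  rw [← htel, hswap]


lemma weighted_diff_bound [Nonempty A] {p q Q : A → ℝ} {U : ℝ}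
    (hp1 : ∑ a, p a = 1) (hq1 : ∑ a, q a = 1)
    (hU : ∀ a a', |Q a - Q a'| ≤ U) :
    |∑ a, (p a - q a) * Q a| ≤ U * ((∑ a, |p a - q a|) / 2) := by
  have hne : (Finset.univ : Finset A).Nonempty := Finset.univ_nonempty
  set M := Finset.univ.sup' hne Q with hM
  set m := Finset.univ.inf' hne Q with hm
  have hMm : M - m ≤ U := by
    obtain ⟨a1, _, hMa⟩ := Finset.exists_mem_eq_sup' hne Q
    obtain ⟨a2, _, hma⟩ := Finset.exists_mem_eq_inf' hne Q
    rw [hM, hMa, hm, hma]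
    calc Q a1 - Q a2 ≤ |Q a1 - Q a2| := le_abs_self _
      _ ≤ U := hU a1 a2
  have hc : ∀ a, |Q a - (M + m) / 2| ≤ U / 2 := by
    intro a
    have h1 : Q a ≤ M := Finset.le_sup' Q (Finset.mem_univ a)
    have h2 : m ≤ Q a := Finset.inf'_le Q (Finset.mem_univ a)
    rw [abs_le]
    constructor <;> linarith
  have hzero : ∑ a, (p a - q a) = 0 := by
    rw [Finset.sum_sub_distrib, hp1, hq1, sub_self]
  calc |∑ a, (p a - q a) * Q a|
      = |∑ a, (p a - q a) * (Q a - (M + m) / 2)| := by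
        congr 1
        rw [show (∑ a, (p a - q a) * (Q a - (M + m) / 2))
            = (∑ a, (p a - q a) * Q a) - (∑ a, (p a - q a)) * ((M + m) / 2) from ?_]
        · rw [hzero]; ring
        · rw [Finset.sum_mul, ← Finset.sum_sub_distrib]
          exact Finset.sum_congr rfl fun a _ => by ring
    _ ≤ ∑ a, |p a - q a| * (U / 2) := by
        refine (Finset.abs_sum_le_sum_abs _ _).trans (Finset.sum_le_sum fun a _ => ?_)
        rw [abs_mul]
        exact mul_le_mul_of_nonneg_left (hc a) (abs_nonneg _)
    _ = U * ((∑ a, |p a - q a|) / 2) := by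
        rw [← Finset.sum_mul]
        ring

lemma tv_abs_sum_le_two {p q : A → ℝ} (hp0 : ∀ a, 0 ≤ p a) (hp1 : ∑ a, p a = 1)
    (hq0 : ∀ a, 0 ≤ q a) (hq1 : ∑ a, q a = 1) :
    ∑ a, |p a - q a| ≤ 2 := by
  calc ∑ a, |p a - q a| ≤ ∑ a, (p a + q a) := by
        refine Finset.sum_le_sum fun a _ => ?_
        rw [abs_sub_comm]
        calc |q a - p a| ≤ |q a| + |p a| := abs_sub _ _
          _ = q a + p a := by rw [abs_of_nonneg (hq0 a), abs_of_nonneg (hp0 a)]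
          _ = p a + q a := add_comm _ _
    _ = 2 := by rw [Finset.sum_add_distrib, hp1, hq1]; norm_num

end Aux

theorem perf_gap_state_dist_shift {S A : Type*} [Fintype S] [Fintype A]
    (P : S → A → S → ℝ) (r : S → A → ℝ) (γ : ℝ) (d0 : S → ℝ)
    (πh πn : S → A → ℝ) (dpref : S → ℝ) (U : ℝ)
    (hγ0 : 0 < γ) (hγ1 : γ < 1)
    (hP0 : ∀ s a s', 0 ≤ P s a s') (hP1 : ∀ s a, ∑ s', P s a s' = 1)
    (hd0 : ∀ s, 0 ≤ d0 s) (hd1 : ∑ s, d0 s = 1)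
    (hh0 : ∀ s a, 0 ≤ πh s a) (hh1 : ∀ s, ∑ a, πh s a = 1)
    (hn0 : ∀ s a, 0 ≤ πn s a) (hn1 : ∀ s, ∑ a, πn s a = 1)
    (hpref0 : ∀ s, 0 ≤ dpref s) (hpref1 : ∑ s, dpref s = 1)
    (hU : ∀ s a a', |Qfun P r γ πh s a - Qfun P r γ πh s a'| ≤ U) :
    Jval P r γ πh d0 - Jval P r γ πn d0 ≤
      (U / (1 - γ)) *
        ((∑ s, dpref s * tvDist (πh s) (πn s)) +
          2 * tvDist (dOcc P γ πn d0) dpref) := by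
  have hS : Nonempty S := by
    by_contra h
    rw [not_nonempty_iff] at h
    rw [Finset.univ_eq_empty, Finset.sum_empty] at hd1
    norm_num at hd1
  obtain ⟨s0⟩ := hS
  have hA : Nonempty A := by
    by_contra h
    rw [not_nonempty_iff] at h
    have h1 := hh1 s0
    rw [Finset.univ_eq_empty, Finset.sum_empty] at h1
    norm_num at h1
  obtain ⟨a0⟩ := hA
  haveI : Nonempty A := ⟨a0⟩
  have hU0 : 0 ≤ U := by simpa using hU s0 a0 a0
  have h1γ : 0 < 1 - γ := by linarith
  set f : S → ℝ := fun s => ∑ a, (πh s a - πn s a) * Qfun P r γ πh s a with hf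
  set T : S → ℝ := fun s => ∑' t : ℕ, γ ^ t * visit P πn d0 t s with hT
  have hpdl : Jval P r γ πh d0 - Jval P r γ πn d0 = ∑ s, T s * f s :=
    pdl_main r γ hγ0 hγ1 hP0 hP1 πh πn hh0 hh1 hn0 hn1 hd0 hd1
  have hdOcc : ∀ s, dOcc P γ πn d0 s = (1 - γ) * T s := fun s => rfl
  have hfb : ∀ s, |f s| ≤ U * tvDist (πh s) (πn s) := by
    intro s
    have h := weighted_diff_bound (p := πh s) (q := πn s)
      (Q := fun a => Qfun P r γ πh s a) (hh1 s) (hn1 s) (fun a a' => hU s a a')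
    simpa [tvDist] using h
  have htv1 : ∀ s, tvDist (πh s) (πn s) ≤ 1 := by
    intro s
    have h := tv_abs_sum_le_two (hh0 s) (hh1 s) (hn0 s) (hn1 s)
    unfold tvDist
    linarith
  have hfU : ∀ s, |f s| ≤ U := fun s =>
    (hfb s).trans (mul_le_of_le_one_right hU0 (htv1 s))
  have key : ∑ s, dOcc P γ πn d0 s * f s ≤
      U * ((∑ s, dpref s * tvDist (πh s) (πn s)) +
        2 * tvDist (dOcc P γ πn d0) dpref) := by
    have h1 : ∑ s, dOcc P γ πn d0 s * f s
        = ∑ s, dpref s * f s + ∑ s, (dOcc P γ πn d0 s - dpref s) * f s := by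
      rw [← Finset.sum_add_distrib]
      exact Finset.sum_congr rfl fun s _ => by ring
    have h2 : ∑ s, dpref s * f s ≤ U * ∑ s, dpref s * tvDist (πh s) (πn s) := by
      calc ∑ s, dpref s * f s
          ≤ ∑ s, dpref s * (U * tvDist (πh s) (πn s)) := by
            refine Finset.sum_le_sum fun s _ => ?_
            exact mul_le_mul_of_nonneg_left ((le_abs_self _).trans (hfb s)) (hpref0 s)
        _ = U * ∑ s, dpref s * tvDist (πh s) (πn s) := by
            rw [Finset.mul_sum]
            exact Finset.sum_congr rfl fun s _ => by ring
    have h3 : ∑ s, (dOcc P γ πn d0 s - dpref s) * f s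
        ≤ U * (2 * tvDist (dOcc P γ πn d0) dpref) := by
      calc ∑ s, (dOcc P γ πn d0 s - dpref s) * f s
          ≤ ∑ s, |dOcc P γ πn d0 s - dpref s| * U := by
            refine Finset.sum_le_sum fun s _ => ?_
            calc (dOcc P γ πn d0 s - dpref s) * f s
                ≤ |(dOcc P γ πn d0 s - dpref s) * f s| := le_abs_self _
              _ = |dOcc P γ πn d0 s - dpref s| * |f s| := abs_mul _ _
              _ ≤ |dOcc P γ πn d0 s - dpref s| * U :=
                  mul_le_mul_of_nonneg_left (hfU s) (abs_nonneg _)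
        _ = (∑ s, |dOcc P γ πn d0 s - dpref s|) * U := (Finset.sum_mul _ _ _).symm
        _ = U * (2 * tvDist (dOcc P γ πn d0) dpref) := by
            unfold tvDist
            ring
    rw [h1, mul_add]
    exact add_le_add h2 h3
  rw [hpdl]
  have hrw : ∑ s, T s * f s = (1 / (1 - γ)) * ∑ s, dOcc P γ πn d0 s * f s := by
    rw [Finset.mul_sum]
    refine Finset.sum_congr rfl fun s _ => ?_
    rw [hdOcc s]
    field_simp
  rw [hrw]
  calc (1 / (1 - γ)) * ∑ s, dOcc P γ πn d0 s * f s
      ≤ (1 / (1 - γ)) * (U * ((∑ s, dpref s * tvDist (πh s) (πn s)) +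
          2 * tvDist (dOcc P γ πn d0) dpref)) := by
        refine mul_le_mul_of_nonneg_left key ?_
        positivity
    _ = (U / (1 - γ)) * ((∑ s, dpref s * tvDist (πh s) (πn s)) +
          2 * tvDist (dOcc P γ πn d0) dpref) := by
        ring
end

section
/- (Main bound) Under the following assumptions: finite MDP with discount γ ∈ (0,1); policies π_h (expert) and π_n (novice) with strictly positive action probabilities; Q* the Q-function of π_h with oscillation |Q*(s,a)−Q*(s,a')| ≤ U; per-state log-probability oscillation of both policies bounded by M; d_pref a state distribution, ρ_pref^s preference-pair distributions, δ_dist = D_TV(d_{π_n}, d_pref), δ_pref = E_{s∼d_pref} D_TV(ρ_ideal^s, ρ_pref^s) with ρ_ideal^s(a⁺,a⁻)=π_h(a⁺|s)π_n(a⁻|s), and ε = L_pref(π_n) − L_pref(π_h) where L_pref(π) = E_{s∼d_pref} E_{(a⁺,a⁻)∼ρ_pref^s}[−log σ(β(log π(a⁺|s) − log π(a⁻|s)))] for β > 0. Then J(π_h) − J(π_n) ≤ (U/(1−γ)) · ( sqrt( (ε + 4(βM + log 2)δ_pref)/(2β) + βM²/8 ) + 2δ_dist ). -/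
open Finset

/-- Preference loss of policy `π` over the empirical preference-pair
distributions `ρpref`. -/
noncomputable def Lpref {S A : Type*} [Fintype S] [Fintype A]
    (dpref : S → ℝ) (ρpref : S → A × A → ℝ) (β : ℝ) (π : S → A → ℝ) : ℝ :=
  ∑ s, dpref s * ∑ p : A × A, ρpref s p *
    (-(Real.log (sigmoid (β * (Real.log (π s p.1) - Real.log (π s p.2))))))


namespace PPLaux

lemma one_sub_mul_exp_le (u : ℝ) : (1 - u) * Real.exp u ≤ 1 := by
  rcases le_or_gt u 1 with h | h
  · have h1 : 1 - u ≤ Real.exp (-u) := by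
      have := Real.add_one_le_exp (-u); linarith
    have h2 : Real.exp (-u) * Real.exp u = 1 := by
      rw [← Real.exp_add]; simp
    have := Real.exp_pos u
    nlinarith
  · nlinarith [Real.exp_pos u]

lemma two_mul_exp_sub_one_le {t : ℝ} (ht : 0 ≤ t) :
    2 * (Real.exp t - 1) ≤ t * (Real.exp t + 1) := by
  set g : ℝ → ℝ := fun t => t * (Real.exp t + 1) - 2 * (Real.exp t - 1) with hg
  have hd : ∀ x : ℝ, HasDerivAt g (1 - (1 - x) * Real.exp x) x := by
    intro x
    have h1 : HasDerivAt (fun x : ℝ => x * (Real.exp x + 1))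
        (1 * (Real.exp x + 1) + x * Real.exp x) x :=
      (hasDerivAt_id x).mul ((Real.hasDerivAt_exp x).add_const 1)
    have h2 : HasDerivAt (fun x : ℝ => 2 * (Real.exp x - 1))
        (2 * Real.exp x) x := by
      simpa using (((Real.hasDerivAt_exp x).sub_const 1).const_mul 2)
    have := h1.sub h2
    exact this.congr_deriv (by ring)
  have hmono : Monotone g := by
    apply monotone_of_deriv_nonneg
    · intro x; exact (hd x).differentiableAt
    · intro x
      rw [(hd x).deriv]
      linarith [one_sub_mul_exp_le x]
  have h0 : g 0 = 0 := by simp [hg]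
  have := hmono ht
  rw [h0] at this
  simp only [hg] at this
  linarith

lemma log_ratio_key {x y : ℝ} (hx : 0 < x) (hy : 0 < y) :
    2 * (x - y) ^ 2 / (x + y) ≤ (x - y) * (Real.log x - Real.log y) := by
  have key : ∀ a b : ℝ, 0 < a → 0 < b → b ≤ a →
      2 * (a - b) ^ 2 / (a + b) ≤ (a - b) * (Real.log a - Real.log b) := by
    intro a b ha hb hba
    set t := Real.log a - Real.log b with hT
    have ht : 0 ≤ t := by
      have := Real.log_le_log hb hba; simp [hT]; linarith
    have hexp : Real.exp t = a / b := by
      rw [hT, Real.exp_sub, Real.exp_log ha, Real.exp_log hb]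
    have h1 : 2 * (a - b) ≤ t * (a + b) := by
      have := two_mul_exp_sub_one_le ht
      rw [hexp] at this
      have hb' : (0:ℝ) < b := hb
      have := mul_le_mul_of_nonneg_right this (le_of_lt hb')
      calc 2 * (a - b) = (2 * (a / b - 1)) * b := by field_simp
        _ ≤ (t * (a / b + 1)) * b := this
        _ = t * (a + b) := by field_simp
    have h2 : 2 * (a - b) ^ 2 ≤ (a - b) * t * (a + b) := by
      have hab : 0 ≤ a - b := by linarith
      nlinarith
    rw [div_le_iff₀ (by linarith : (0:ℝ) < a + b)]
    nlinarith
  rcases le_total y x with h | h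
  · exact key x y hx hy h
  · have := key y x hy hx h
    have e1 : (y - x) ^ 2 = (x - y) ^ 2 := by ring
    have e2 : (y - x) * (Real.log y - Real.log x)
        = (x - y) * (Real.log x - Real.log y) := by ring
    rw [e1, e2, add_comm y x] at this
    exact this


lemma tvDist_nonneg {X : Type*} [Fintype X] (P Q : X → ℝ) : 0 ≤ tvDist P Q := by
  unfold tvDist
  positivity

lemma tvDist_le_one {X : Type*} [Fintype X] {P Q : X → ℝ}
    (hP0 : ∀ x, 0 ≤ P x) (hQ0 : ∀ x, 0 ≤ Q x)
    (hP1 : ∑ x, P x = 1) (hQ1 : ∑ x, Q x = 1) : tvDist P Q ≤ 1 := by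
  unfold tvDist
  rw [div_le_one (by norm_num : (0:ℝ) < 2)]
  calc ∑ x, |P x - Q x| ≤ ∑ x, (P x + Q x) := by
        apply Finset.sum_le_sum
        intro x _
        rw [abs_le]
        constructor <;> nlinarith [hP0 x, hQ0 x]
    _ = 2 := by rw [Finset.sum_add_distrib, hP1, hQ1]; norm_num

lemma pinsker {A : Type*} [Fintype A] {p q : A → ℝ}
    (hp0 : ∀ a, 0 < p a) (hq0 : ∀ a, 0 < q a)
    (hp1 : ∑ a, p a = 1) (hq1 : ∑ a, q a = 1) :
    4 * tvDist p q ^ 2 ≤ ∑ a, (p a - q a) * (Real.log (p a) - Real.log (q a)) := by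
  have hpq : ∀ a, 0 < p a + q a := fun a => by linarith [hp0 a, hq0 a]
  have cs := Finset.sum_mul_sq_le_sq_mul_sq Finset.univ
    (fun a => |p a - q a| / Real.sqrt (p a + q a))
    (fun a => Real.sqrt (p a + q a))
  have e1 : ∀ a : A, |p a - q a| / Real.sqrt (p a + q a) * Real.sqrt (p a + q a)
      = |p a - q a| := by
    intro a
    rw [div_mul_cancel₀]
    exact ne_of_gt (Real.sqrt_pos.2 (hpq a))
  have e2 : ∀ a : A, (|p a - q a| / Real.sqrt (p a + q a)) ^ 2
      = (p a - q a) ^ 2 / (p a + q a) := by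
    intro a
    rw [div_pow, sq_abs, Real.sq_sqrt (le_of_lt (hpq a))]
  have e3 : ∀ a : A, (Real.sqrt (p a + q a)) ^ 2 = p a + q a := by
    intro a; exact Real.sq_sqrt (le_of_lt (hpq a))
  simp only [e1, e2, e3] at cs
  have h4 : ∑ a, (p a + q a) = 2 := by
    rw [Finset.sum_add_distrib, hp1, hq1]; norm_num
  rw [h4] at cs
  have h5 : (∑ a, |p a - q a|) = 2 * tvDist p q := by
    unfold tvDist; ring
  rw [h5] at cs
  have h6 : 4 * tvDist p q ^ 2 ≤ 2 * ∑ a, (p a - q a) ^ 2 / (p a + q a) := by nlinarith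
  calc 4 * tvDist p q ^ 2 ≤ ∑ a, 2 * ((p a - q a) ^ 2 / (p a + q a)) := by
        rw [← Finset.mul_sum]; linarith
    _ ≤ ∑ a, (p a - q a) * (Real.log (p a) - Real.log (q a)) := by
        apply Finset.sum_le_sum
        intro a _
        have := log_ratio_key (hp0 a) (hq0 a)
        calc 2 * ((p a - q a) ^ 2 / (p a + q a))
            = 2 * (p a - q a) ^ 2 / (p a + q a) := by ring
          _ ≤ _ := this

lemma one_add_exp_pos (x : ℝ) : (0:ℝ) < 1 + Real.exp x := by positivity

lemma neg_log_sigmoid (x : ℝ) :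
    -(Real.log (sigmoid x)) = Real.log (1 + Real.exp (-x)) := by
  unfold sigmoid
  rw [one_div, Real.log_inv, neg_neg]

lemma log_decomp (t : ℝ) :
    Real.log (1 + Real.exp (-t)) = -t/2 + Real.log (2 * Real.cosh (t/2)) := by
  have h : 1 + Real.exp (-t) = Real.exp (-t/2) * (2 * Real.cosh (t/2)) := by
    rw [Real.cosh_eq]
    rw [show (2:ℝ) * ((Real.exp (t/2) + Real.exp (-(t/2))) / 2)
        = Real.exp (t/2) + Real.exp (-(t/2)) by ring]
    rw [mul_add, ← Real.exp_add, ← Real.exp_add,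
      show -t/2 + t/2 = (0:ℝ) by ring, show -t/2 + -(t/2) = -t by ring,
      Real.exp_zero]
  rw [h, Real.log_mul (by positivity) (by positivity), Real.log_exp]

lemma log_two_cosh_lower (u : ℝ) : Real.log 2 ≤ Real.log (2 * Real.cosh u) := by
  apply Real.log_le_log (by norm_num)
  nlinarith [Real.one_le_cosh u]

lemma log_two_cosh_upper (u : ℝ) :
    Real.log (2 * Real.cosh u) ≤ Real.log 2 + u ^ 2 / 2 := by
  have h1 : Real.log (2 * Real.cosh u) = Real.log 2 + Real.log (Real.cosh u) := by
    rw [Real.log_mul (by norm_num) (ne_of_gt (Real.cosh_pos u))]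
  rw [h1]
  have h2 : Real.log (Real.cosh u) ≤ u ^ 2 / 2 := by
    calc Real.log (Real.cosh u) ≤ Real.log (Real.exp (u ^ 2 / 2)) :=
          Real.log_le_log (Real.cosh_pos u) (Real.cosh_le_exp_half_sq u)
      _ = u ^ 2 / 2 := Real.log_exp _
  linarith

/-- bounds on the preference loss integrand -/
lemma loss_nonneg (x : ℝ) : 0 ≤ Real.log (1 + Real.exp x) := by
  apply Real.log_nonneg
  nlinarith [Real.exp_pos x]

lemma loss_le {x C : ℝ} (hx : x ≤ C) (hC : 0 ≤ C) :
    Real.log (1 + Real.exp x) ≤ C + Real.log 2 := by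
  calc Real.log (1 + Real.exp x) ≤ Real.log (2 * Real.exp C) := by
        apply Real.log_le_log (one_add_exp_pos x)
        nlinarith [Real.exp_le_exp.2 hx, Real.one_le_exp hC]
    _ = Real.log 2 + C := by
        rw [Real.log_mul (by norm_num) (ne_of_gt (Real.exp_pos C)), Real.log_exp]
    _ = C + Real.log 2 := by ring


lemma state_gap {A : Type*} [Fintype A] (p q : A → ℝ) (β M : ℝ) (hβ : 0 < β)
    (hp0 : ∀ a, 0 < p a) (hp1 : ∑ a, p a = 1)
    (hq0 : ∀ a, 0 < q a) (hq1 : ∑ a, q a = 1)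
    (hpM : ∀ a b, |Real.log (p a) - Real.log (p b)| ≤ M) :
    2 * β * (tvDist p q) ^ 2 - β ^ 2 * M ^ 2 / 8 ≤
      ∑ a, ∑ b, p a * q b *
        (Real.log (1 + Real.exp (-(β * (Real.log (q a) - Real.log (q b)))))
          - Real.log (1 + Real.exp (-(β * (Real.log (p a) - Real.log (p b)))))) := by
  set φ : A → ℝ := fun a => Real.log (p a) - Real.log (q a) with hφ
  set c : ℝ := β ^ 2 * M ^ 2 / 8 with hc
  -- pointwise bound
  have point : ∀ a b : A,
      β * (φ a - φ b) / 2 - c ≤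
        Real.log (1 + Real.exp (-(β * (Real.log (q a) - Real.log (q b)))))
          - Real.log (1 + Real.exp (-(β * (Real.log (p a) - Real.log (p b))))) := by
    intro a b
    set h := β * (Real.log (p a) - Real.log (p b)) with hh
    set n := β * (Real.log (q a) - Real.log (q b)) with hn
    have e1 : Real.log (1 + Real.exp (-n)) = -n/2 + Real.log (2 * Real.cosh (n/2)) :=
      log_decomp n
    have e2 : Real.log (1 + Real.exp (-h)) = -h/2 + Real.log (2 * Real.cosh (h/2)) :=
      log_decomp h
    have b1 : Real.log 2 ≤ Real.log (2 * Real.cosh (n/2)) := log_two_cosh_lower _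
    have b2 : Real.log (2 * Real.cosh (h/2)) ≤ Real.log 2 + (h/2) ^ 2 / 2 :=
      log_two_cosh_upper _
    have hM : h ^ 2 ≤ β ^ 2 * M ^ 2 := by
      have := hpM a b
      have habs : |h| ≤ β * M := by
        rw [hh, abs_mul, abs_of_pos hβ]
        exact mul_le_mul_of_nonneg_left this (le_of_lt hβ)
      nlinarith [abs_nonneg h, sq_abs h]
    have hphi : β * (φ a - φ b) = h - n := by rw [hφ]; simp only []; rw [hh, hn]; ring
    rw [e1, e2, hphi, hc]
    nlinarith
  -- sum the pointwise bound
  have sum1 : ∑ a, ∑ b, p a * q b * (β * (φ a - φ b) / 2 - c) ≤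
      ∑ a, ∑ b, p a * q b *
        (Real.log (1 + Real.exp (-(β * (Real.log (q a) - Real.log (q b)))))
          - Real.log (1 + Real.exp (-(β * (Real.log (p a) - Real.log (p b)))))) := by
    apply Finset.sum_le_sum; intro a _
    apply Finset.sum_le_sum; intro b _
    exact mul_le_mul_of_nonneg_left (point a b)
      (mul_nonneg (le_of_lt (hp0 a)) (le_of_lt (hq0 b)))
  -- compute the left sum
  have S := ∑ b, q b * φ b
  have inner : ∀ a : A, ∑ b, p a * q b * (β * (φ a - φ b) / 2 - c)
      = β / 2 * (p a * φ a) - β / 2 * (p a * ∑ b, q b * φ b) - c * p a := by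
    intro a
    calc ∑ b, p a * q b * (β * (φ a - φ b) / 2 - c)
        = ∑ b, ((β / 2 * (p a * φ a) - c * p a) * q b
            - β / 2 * p a * (q b * φ b)) := by
          apply Finset.sum_congr rfl; intro b _; ring
      _ = (β / 2 * (p a * φ a) - c * p a) * (∑ b, q b)
            - β / 2 * p a * (∑ b, q b * φ b) := by
          rw [Finset.sum_sub_distrib, ← Finset.mul_sum, ← Finset.mul_sum]
      _ = β / 2 * (p a * φ a) - β / 2 * (p a * ∑ b, q b * φ b) - c * p a := by
          rw [hq1]; ring
  have outer : ∑ a, ∑ b, p a * q b * (β * (φ a - φ b) / 2 - c)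
      = β / 2 * (∑ a, (p a - q a) * φ a) - c := by
    rw [Finset.sum_congr rfl (fun a _ => inner a)]
    rw [Finset.sum_sub_distrib, Finset.sum_sub_distrib,
      ← Finset.mul_sum, ← Finset.mul_sum, ← Finset.mul_sum]
    have e : ∑ a, p a * (∑ b, q b * φ b) = (∑ b, q b * φ b) := by
      rw [← Finset.sum_mul, hp1, one_mul]
    rw [e, hp1]
    have e2 : ∑ a, (p a - q a) * φ a = (∑ a, p a * φ a) - ∑ a, q a * φ a := by
      rw [← Finset.sum_sub_distrib]
      apply Finset.sum_congr rfl; intro a _; ring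
    rw [e2]; ring
  have pk := pinsker hp0 hq0 hp1 hq1
  have : 2 * β * (tvDist p q) ^ 2 - c ≤
      ∑ a, ∑ b, p a * q b * (β * (φ a - φ b) / 2 - c) := by
    rw [outer]
    have : 2 * β * (tvDist p q) ^ 2 ≤ β / 2 * (∑ a, (p a - q a) * φ a) := by
      have := mul_le_mul_of_nonneg_left pk (by positivity : (0:ℝ) ≤ β / 2)
      calc 2 * β * (tvDist p q) ^ 2 = β / 2 * (4 * tvDist p q ^ 2) := by ring
        _ ≤ _ := this
    linarith
  rw [hc] at this
  linarith [sum1]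


section MDPaux
variable {S A : Type*} [Fintype S] [Fintype A]

lemma sum4_swap (f : S → A → S → A → ℝ) :
    ∑ s, ∑ a, ∑ s1, ∑ a1, f s a s1 a1 = ∑ s1, ∑ a1, ∑ s, ∑ a, f s a s1 a1 := by
  calc ∑ s, ∑ a, ∑ s1, ∑ a1, f s a s1 a1
      = ∑ s, ∑ s1, ∑ a, ∑ a1, f s a s1 a1 :=
        Finset.sum_congr rfl (fun s _ => Finset.sum_comm)
    _ = ∑ s1, ∑ s, ∑ a, ∑ a1, f s a s1 a1 := Finset.sum_comm
    _ = ∑ s1, ∑ s, ∑ a1, ∑ a, f s a s1 a1 :=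
        Finset.sum_congr rfl (fun s1 _ =>
          Finset.sum_congr rfl (fun s _ => Finset.sum_comm))
    _ = ∑ s1, ∑ a1, ∑ s, ∑ a, f s a s1 a1 :=
        Finset.sum_congr rfl (fun s1 _ => Finset.sum_comm)

lemma sum3_swap (f : S → A → S → ℝ) :
    ∑ s, ∑ a, ∑ s1, f s a s1 = ∑ s1, ∑ s, ∑ a, f s a s1 := by
  calc ∑ s, ∑ a, ∑ s1, f s a s1
      = ∑ s, ∑ s1, ∑ a, f s a s1 :=
        Finset.sum_congr rfl (fun s _ => Finset.sum_comm)
    _ = ∑ s1, ∑ s, ∑ a, f s a s1 := Finset.sum_comm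

variable {P : S → A → S → ℝ} {r : S → A → ℝ} {γ : ℝ} {π : S → A → ℝ}

lemma visit_nonneg (hP0 : ∀ s a s', 0 ≤ P s a s') (hπ0 : ∀ s a, 0 ≤ π s a)
    {d0 : S → ℝ} (hd0 : ∀ s, 0 ≤ d0 s) : ∀ t s, 0 ≤ visit P π d0 t s := by
  intro t
  induction t with
  | zero => exact hd0
  | succ t ih =>
    intro s'
    simp only [visit]
    apply Finset.sum_nonneg; intro s _
    apply Finset.sum_nonneg; intro a _
    exact mul_nonneg (mul_nonneg (ih s) (hπ0 s a)) (hP0 s a s')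

lemma visit_sum_one (hP1 : ∀ s a, ∑ s', P s a s' = 1)
    (hπ1 : ∀ s, ∑ a, π s a = 1)
    {d0 : S → ℝ} (hd1 : ∑ s, d0 s = 1) : ∀ t, ∑ s, visit P π d0 t s = 1 := by
  intro t
  induction t with
  | zero => exact hd1
  | succ t ih =>
    simp only [visit]
    rw [← sum3_swap (fun s a s' => visit P π d0 t s * π s a * P s a s')]
    have e : ∀ s : S, ∑ a, ∑ s', visit P π d0 t s * π s a * P s a s'
        = visit P π d0 t s := by
      intro s
      calc ∑ a, ∑ s', visit P π d0 t s * π s a * P s a s'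
          = ∑ a, visit P π d0 t s * π s a * ∑ s', P s a s' := by
            apply Finset.sum_congr rfl; intro a _
            rw [Finset.mul_sum]
        _ = ∑ a, visit P π d0 t s * π s a := by
            apply Finset.sum_congr rfl; intro a _
            rw [hP1 s a, mul_one]
        _ = visit P π d0 t s * ∑ a, π s a := by rw [Finset.mul_sum]
        _ = visit P π d0 t s := by rw [hπ1 s, mul_one]
    rw [Finset.sum_congr rfl (fun s _ => e s)]
    exact ih


lemma visit_le_one (hP0 : ∀ s a s', 0 ≤ P s a s') (hπ0 : ∀ s a, 0 ≤ π s a)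
    (hP1 : ∀ s a, ∑ s', P s a s' = 1) (hπ1 : ∀ s, ∑ a, π s a = 1)
    {d0 : S → ℝ} (hd0 : ∀ s, 0 ≤ d0 s) (hd1 : ∑ s, d0 s = 1)
    (t : ℕ) (s : S) : visit P π d0 t s ≤ 1 := by
  have h1 := visit_sum_one hP1 hπ1 hd1 t
  have h2 : ∀ x ∈ Finset.univ, 0 ≤ visit P π d0 t x :=
    fun x _ => visit_nonneg hP0 hπ0 hd0 t x
  calc visit P π d0 t s ≤ ∑ x, visit P π d0 t x :=
        Finset.single_le_sum h2 (Finset.mem_univ s)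
    _ = 1 := h1

/-- expected reward at time t -/
noncomputable def Fexp (P : S → A → S → ℝ) (r : S → A → ℝ) (π : S → A → ℝ)
    (d0 : S → ℝ) (t : ℕ) : ℝ :=
  ∑ s, ∑ a, visit P π d0 t s * π s a * r s a

lemma Jval_eq_tsum_Fexp (d0 : S → ℝ) :
    Jval P r γ π d0 = ∑' t : ℕ, γ ^ t * Fexp P r π d0 t := rfl

lemma Fexp_abs_le (hP0 : ∀ s a s', 0 ≤ P s a s') (hπ0 : ∀ s a, 0 ≤ π s a)
    (hP1 : ∀ s a, ∑ s', P s a s' = 1) (hπ1 : ∀ s, ∑ a, π s a = 1)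
    {d0 : S → ℝ} (hd0 : ∀ s, 0 ≤ d0 s) (hd1 : ∑ s, d0 s = 1)
    (t : ℕ) : |Fexp P r π d0 t| ≤ ∑ s, ∑ a, |r s a| := by
  unfold Fexp
  calc |∑ s, ∑ a, visit P π d0 t s * π s a * r s a|
      ≤ ∑ s, |∑ a, visit P π d0 t s * π s a * r s a| :=
        Finset.abs_sum_le_sum_abs _ _
    _ ≤ ∑ s, ∑ a, |visit P π d0 t s * π s a * r s a| := by
        apply Finset.sum_le_sum; intro s _
        exact Finset.abs_sum_le_sum_abs _ _
    _ ≤ ∑ s, ∑ a, |r s a| := by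
        apply Finset.sum_le_sum; intro s _
        apply Finset.sum_le_sum; intro a _
        rw [abs_mul, abs_mul]
        have h1 : |visit P π d0 t s| ≤ 1 := by
          rw [abs_of_nonneg (visit_nonneg hP0 hπ0 hd0 t s)]
          exact visit_le_one hP0 hπ0 hP1 hπ1 hd0 hd1 t s
        have h2 : |π s a| ≤ 1 := by
          rw [abs_of_nonneg (hπ0 s a)]
          calc π s a ≤ ∑ a', π s a' :=
                Finset.single_le_sum (fun a' _ => hπ0 s a') (Finset.mem_univ a)
            _ = 1 := hπ1 s
        have h3 : |visit P π d0 t s| * |π s a| ≤ 1 :=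
          mul_le_one₀ h1 (abs_nonneg _) h2
        nlinarith [abs_nonneg (r s a), abs_nonneg (visit P π d0 t s),
          abs_nonneg (π s a)]

lemma summable_geom_bound {γ : ℝ} (hγ0 : 0 ≤ γ) (hγ1 : γ < 1)
    {f : ℕ → ℝ} {C : ℝ} (hf : ∀ t, |f t| ≤ C) :
    Summable (fun t : ℕ => γ ^ t * f t) := by
  apply Summable.of_norm_bounded ((summable_geometric_of_lt_one hγ0 hγ1).mul_left C)
  intro t
  rw [Real.norm_eq_abs, abs_mul, abs_pow, abs_of_nonneg hγ0]
  calc γ ^ t * |f t| ≤ γ ^ t * C :=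
        mul_le_mul_of_nonneg_left (hf t) (pow_nonneg hγ0 t)
    _ = C * γ ^ t := by ring

lemma visit_shift (d0 : S → ℝ) : ∀ (t : ℕ) (s' : S),
    ∑ s, ∑ a, d0 s * π s a * visit P π (P s a) t s' = visit P π d0 (t + 1) s' := by
  intro t
  induction t with
  | zero => intro s'; simp only [visit]
  | succ t ih =>
    intro s'
    have lhs_eq : ∑ s, ∑ a, d0 s * π s a * visit P π (P s a) (t + 1) s'
        = ∑ s1, ∑ a1, (∑ s, ∑ a, d0 s * π s a * visit P π (P s a) t s1)
            * π s1 a1 * P s1 a1 s' := by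
      calc ∑ s, ∑ a, d0 s * π s a * visit P π (P s a) (t + 1) s'
          = ∑ s, ∑ a, ∑ s1, ∑ a1, d0 s * π s a *
              (visit P π (P s a) t s1 * π s1 a1 * P s1 a1 s') := by
            apply Finset.sum_congr rfl; intro s _
            apply Finset.sum_congr rfl; intro a _
            simp only [visit]
            rw [Finset.mul_sum]
            apply Finset.sum_congr rfl; intro s1 _
            rw [Finset.mul_sum]
        _ = ∑ s1, ∑ a1, ∑ s, ∑ a, d0 s * π s a *
              (visit P π (P s a) t s1 * π s1 a1 * P s1 a1 s') :=
            sum4_swap _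
        _ = ∑ s1, ∑ a1, (∑ s, ∑ a, d0 s * π s a * visit P π (P s a) t s1)
              * π s1 a1 * P s1 a1 s' := by
            apply Finset.sum_congr rfl; intro s1 _
            apply Finset.sum_congr rfl; intro a1 _
            rw [Finset.sum_mul, Finset.sum_mul]
            apply Finset.sum_congr rfl; intro s _
            rw [Finset.sum_mul, Finset.sum_mul]
            apply Finset.sum_congr rfl; intro a _
            ring
    rw [lhs_eq]
    have : ∀ s1, (∑ s, ∑ a, d0 s * π s a * visit P π (P s a) t s1)
        = visit P π d0 (t+1) s1 := fun s1 => ih s1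
    rw [Finset.sum_congr rfl (fun s1 _ => by rw [this s1])]
    rfl

lemma Fexp_shift (d0 : S → ℝ) (t : ℕ) :
    ∑ s, ∑ a, d0 s * π s a * Fexp P r π (P s a) t = Fexp P r π d0 (t + 1) := by
  unfold Fexp
  calc ∑ s, ∑ a, d0 s * π s a *
        (∑ s1, ∑ a1, visit P π (P s a) t s1 * π s1 a1 * r s1 a1)
      = ∑ s, ∑ a, ∑ s1, ∑ a1, d0 s * π s a *
          (visit P π (P s a) t s1 * π s1 a1 * r s1 a1) := by
        apply Finset.sum_congr rfl; intro s _
        apply Finset.sum_congr rfl; intro a _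
        rw [Finset.mul_sum]
        apply Finset.sum_congr rfl; intro s1 _
        rw [Finset.mul_sum]
    _ = ∑ s1, ∑ a1, ∑ s, ∑ a, d0 s * π s a *
          (visit P π (P s a) t s1 * π s1 a1 * r s1 a1) := sum4_swap _
    _ = ∑ s1, ∑ a1, (∑ s, ∑ a, d0 s * π s a * visit P π (P s a) t s1)
          * π s1 a1 * r s1 a1 := by
        apply Finset.sum_congr rfl; intro s1 _
        apply Finset.sum_congr rfl; intro a1 _
        rw [Finset.sum_mul, Finset.sum_mul]
        apply Finset.sum_congr rfl; intro s _
        rw [Finset.sum_mul, Finset.sum_mul]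
        apply Finset.sum_congr rfl; intro a _
        ring
    _ = ∑ s1, ∑ a1, visit P π d0 (t+1) s1 * π s1 a1 * r s1 a1 := by
        apply Finset.sum_congr rfl; intro s1 _
        apply Finset.sum_congr rfl; intro a1 _
        rw [visit_shift d0 t s1]


lemma Qfun_eq (s : S) (a : A) :
    Qfun P r γ π s a = r s a + γ * Jval P r γ π (P s a) := by
  unfold Qfun
  congr 1
  rw [Jval_eq_tsum_Fexp, ← tsum_mul_left]
  exact tsum_congr (fun t => by rw [pow_succ]; unfold Fexp; ring)

/-- the summable bound we use everywhere -/
lemma summable_JF (hγ0 : 0 < γ) (hγ1 : γ < 1)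
    (hP0 : ∀ s a s', 0 ≤ P s a s') (hπ0 : ∀ s a, 0 ≤ π s a)
    (hP1 : ∀ s a, ∑ s', P s a s' = 1) (hπ1 : ∀ s, ∑ a, π s a = 1)
    {d0 : S → ℝ} (hd0 : ∀ s, 0 ≤ d0 s) (hd1 : ∑ s, d0 s = 1) :
    Summable (fun t : ℕ => γ ^ t * Fexp P r π d0 t) :=
  summable_geom_bound (le_of_lt hγ0) hγ1
    (Fexp_abs_le hP0 hπ0 hP1 hπ1 hd0 hd1)

lemma Jval_dist_eq (hγ0 : 0 < γ) (hγ1 : γ < 1)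
    (hP0 : ∀ s a s', 0 ≤ P s a s') (hπ0 : ∀ s a, 0 ≤ π s a)
    (hP1 : ∀ s a, ∑ s', P s a s' = 1) (hπ1 : ∀ s, ∑ a, π s a = 1)
    {d0 : S → ℝ} (hd0 : ∀ s, 0 ≤ d0 s) (hd1 : ∑ s, d0 s = 1) :
    Jval P r γ π d0 = ∑ s, d0 s * ∑ a, π s a * Qfun P r γ π s a := by
  have hsum : ∀ (s : S) (a : A),
      Summable (fun t : ℕ => γ ^ (t+1) * (d0 s * π s a * Fexp P r π (P s a) t)) := by
    intro s a
    have : (fun t : ℕ => γ ^ (t+1) * (d0 s * π s a * Fexp P r π (P s a) t))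
        = fun t : ℕ => γ ^ t * (γ * (d0 s * π s a * Fexp P r π (P s a) t)) := by
      funext t; rw [pow_succ]; ring
    rw [this]
    apply summable_geom_bound (le_of_lt hγ0) hγ1
      (C := |γ * (d0 s * π s a)| * (∑ s', ∑ a', |r s' a'|))
    intro t
    have hF := Fexp_abs_le hP0 hπ0 hP1 hπ1 (hP0 s a) (hP1 s a) (r := r) (t := t)
    calc |γ * (d0 s * π s a * Fexp P r π (P s a) t)|
        = |γ * (d0 s * π s a)| * |Fexp P r π (P s a) t| := by
          rw [← abs_mul]; ring_nf
      _ ≤ |γ * (d0 s * π s a)| * (∑ s', ∑ a', |r s' a'|) :=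
          mul_le_mul_of_nonneg_left hF (abs_nonneg _)
  -- RHS expansion
  have expand : ∑ s, d0 s * ∑ a, π s a * Qfun P r γ π s a
      = (∑ s, ∑ a, d0 s * π s a * r s a) +
        ∑ s, ∑ a, ∑' t : ℕ, γ ^ (t+1) * (d0 s * π s a * Fexp P r π (P s a) t) := by
    rw [← Finset.sum_add_distrib]
    apply Finset.sum_congr rfl; intro s _
    rw [← Finset.sum_add_distrib, Finset.mul_sum]
    apply Finset.sum_congr rfl; intro a _
    unfold Qfun
    have e1 : (∑' t : ℕ, γ ^ (t + 1) *
        ∑ s', ∑ a', visit P π (P s a) t s' * π s' a' * r s' a')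
        = ∑' t : ℕ, γ ^ (t+1) * Fexp P r π (P s a) t := rfl
    rw [e1]
    rw [show ∑' t : ℕ, γ ^ (t+1) * (d0 s * π s a * Fexp P r π (P s a) t)
        = d0 s * π s a * ∑' t : ℕ, γ ^ (t+1) * Fexp P r π (P s a) t by
      rw [← tsum_mul_left]; exact tsum_congr (fun t => by ring)]
    ring
  have swap : ∑ s, ∑ a, ∑' t : ℕ, γ ^ (t+1) * (d0 s * π s a * Fexp P r π (P s a) t)
      = ∑' t : ℕ, γ ^ (t+1) * Fexp P r π d0 (t+1) := by
    have step1 : ∀ s : S, ∑ a, ∑' t : ℕ, γ ^ (t+1) *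
        (d0 s * π s a * Fexp P r π (P s a) t)
        = ∑' t : ℕ, ∑ a, γ ^ (t+1) * (d0 s * π s a * Fexp P r π (P s a) t) :=
      fun s => (Summable.tsum_finsetSum (fun a _ => hsum s a)).symm
    rw [Finset.sum_congr rfl (fun s _ => step1 s)]
    rw [← Summable.tsum_finsetSum (fun s _ => summable_sum (fun a _ => hsum s a))]
    apply tsum_congr; intro t
    rw [← Fexp_shift d0 t, Finset.mul_sum]
    apply Finset.sum_congr rfl; intro s _
    rw [Finset.mul_sum]
  rw [expand, swap]
  rw [Jval_eq_tsum_Fexp,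
    Summable.tsum_eq_zero_add (summable_JF hγ0 hγ1 hP0 hπ0 hP1 hπ1 hd0 hd1)]
  congr 1
  · simp [Fexp, visit]


lemma pdl (hγ0 : 0 < γ) (hγ1 : γ < 1)
    (hP0 : ∀ s a s', 0 ≤ P s a s') (hP1 : ∀ s a, ∑ s', P s a s' = 1)
    {πh πn : S → A → ℝ}
    (hh0 : ∀ s a, 0 ≤ πh s a) (hh1 : ∀ s, ∑ a, πh s a = 1)
    (hn0 : ∀ s a, 0 ≤ πn s a) (hn1 : ∀ s, ∑ a, πn s a = 1)
    {d0 : S → ℝ} (hd0 : ∀ s, 0 ≤ d0 s) (hd1 : ∑ s, d0 s = 1) :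
    Jval P r γ πh d0 - Jval P r γ πn d0 =
      ∑ s, (∑' t : ℕ, γ ^ t * visit P πn d0 t s) *
        (∑ a, (πh s a - πn s a) * Qfun P r γ πh s a) := by
  set V : S → ℝ := fun s => ∑ a, πh s a * Qfun P r γ πh s a with hV
  set W : ℕ → ℝ := fun t => ∑ s, visit P πn d0 t s * V s with hW
  set f : S → ℝ := fun s => ∑ a, (πh s a - πn s a) * Qfun P r γ πh s a with hf
  have hv0 : ∀ t s, 0 ≤ visit P πn d0 t s := visit_nonneg hP0 hn0 hd0
  have hv1 : ∀ t s, visit P πn d0 t s ≤ 1 :=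
    visit_le_one hP0 hn0 hP1 hn1 hd0 hd1
  -- bound on W
  have hWb : ∀ t, |W t| ≤ ∑ s, |V s| := by
    intro t
    calc |W t| ≤ ∑ s, |visit P πn d0 t s * V s| := Finset.abs_sum_le_sum_abs _ _
      _ ≤ ∑ s, |V s| := by
          apply Finset.sum_le_sum; intro s _
          rw [abs_mul, abs_of_nonneg (hv0 t s)]
          nlinarith [abs_nonneg (V s), hv0 t s, hv1 t s]
  have SW : Summable (fun t : ℕ => γ ^ t * W t) :=
    summable_geom_bound (le_of_lt hγ0) hγ1 hWb
  have SW1 : Summable (fun t : ℕ => γ ^ t * W (t+1)) :=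
    summable_geom_bound (le_of_lt hγ0) hγ1 (fun t => hWb (t+1))
  have SF : Summable (fun t : ℕ => γ ^ t * Fexp P r πn d0 t) :=
    summable_JF hγ0 hγ1 hP0 hn0 hP1 hn1 hd0 hd1
  -- the Bellman form of Q
  have hQ : ∀ s a, Qfun P r γ πh s a = r s a + γ * ∑ s', P s a s' * V s' := by
    intro s a
    rw [Qfun_eq, Jval_dist_eq hγ0 hγ1 hP0 hh0 hP1 hh1 (hP0 s a) (hP1 s a)]
  -- per-time identity
  have key_t : ∀ t, ∑ s, visit P πn d0 t s * f s
      = W t - Fexp P r πn d0 t - γ * W (t+1) := by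
    intro t
    have e1 : ∑ s, visit P πn d0 t s * f s
        = W t - ∑ s, ∑ a, visit P πn d0 t s * πn s a * Qfun P r γ πh s a := by
      rw [hW]
      simp only []
      rw [← Finset.sum_sub_distrib]
      apply Finset.sum_congr rfl; intro s _
      rw [hf, hV]
      simp only []
      rw [Finset.mul_sum, Finset.mul_sum, ← Finset.sum_sub_distrib]
      apply Finset.sum_congr rfl; intro a _
      ring
    have e2 : ∑ s, ∑ a, visit P πn d0 t s * πn s a * Qfun P r γ πh s a
        = Fexp P r πn d0 t + γ * W (t+1) := by
      have term_eq : ∀ (s : S) (a : A),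
          visit P πn d0 t s * πn s a * Qfun P r γ πh s a
          = visit P πn d0 t s * πn s a * r s a
            + ∑ s', γ * (visit P πn d0 t s * πn s a * (P s a s' * V s')) := by
        intro s a
        rw [hQ s a, mul_add, Finset.mul_sum, Finset.mul_sum]
        congr 1
        apply Finset.sum_congr rfl; intro s' _
        ring
      have e2a : ∑ s, ∑ a, visit P πn d0 t s * πn s a * Qfun P r γ πh s a
          = (∑ s, ∑ a, visit P πn d0 t s * πn s a * r s a)
            + ∑ s, ∑ a, ∑ s', γ * (visit P πn d0 t s * πn s a * (P s a s' * V s')) := by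
        rw [← Finset.sum_add_distrib]
        apply Finset.sum_congr rfl; intro s _
        rw [← Finset.sum_add_distrib]
        apply Finset.sum_congr rfl; intro a _
        exact term_eq s a
      rw [e2a]
      congr 1
      rw [sum3_swap (fun s a s' => γ * (visit P πn d0 t s * πn s a * (P s a s' * V s')))]
      have e2c : ∀ s' : S, ∑ s, ∑ a, γ * (visit P πn d0 t s * πn s a * (P s a s' * V s'))
          = visit P πn d0 (t+1) s' * (γ * V s') := by
        intro s'
        have hv : visit P πn d0 (t+1) s'
            = ∑ s, ∑ a, visit P πn d0 t s * πn s a * P s a s' := rfl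
        rw [hv, Finset.sum_mul]
        apply Finset.sum_congr rfl; intro s _
        rw [Finset.sum_mul]
        apply Finset.sum_congr rfl; intro a _
        ring
      rw [Finset.sum_congr rfl (fun s' _ => e2c s'), hW]
      simp only []
      rw [Finset.mul_sum]
      apply Finset.sum_congr rfl; intro s' _
      ring
    rw [e1, e2]
    ring
  -- telescoping
  have tele : ∑' t : ℕ, γ ^ t * W t = W 0 + γ * ∑' t : ℕ, γ ^ t * W (t+1) := by
    rw [Summable.tsum_eq_zero_add SW]
    congr 1
    · simp
    · rw [← tsum_mul_left]
      exact tsum_congr (fun t => by rw [pow_succ]; ring)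
  have main : Jval P r γ πh d0 - Jval P r γ πn d0
      = ∑' t : ℕ, γ ^ t * ∑ s, visit P πn d0 t s * f s := by
    have hJh : Jval P r γ πh d0 = W 0 := by
      rw [Jval_dist_eq hγ0 hγ1 hP0 hh0 hP1 hh1 hd0 hd1, hW]
      rfl
    have hJn : Jval P r γ πn d0 = ∑' t : ℕ, γ ^ t * Fexp P r πn d0 t := rfl
    have e3 : (fun t : ℕ => γ ^ t * ∑ s, visit P πn d0 t s * f s)
        = fun t : ℕ => (γ ^ t * W t - γ ^ t * Fexp P r πn d0 t)
            - γ * (γ ^ t * W (t+1)) := by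
      funext t
      rw [key_t t]
      ring
    rw [e3, Summable.tsum_sub (SW.sub SF) (SW1.mul_left γ), Summable.tsum_sub SW SF, tsum_mul_left]
    rw [hJh, hJn, tele]
    ring
  rw [main]
  -- swap tsum and finite sum
  have hfb : ∀ s, ∀ t : ℕ, |visit P πn d0 t s * f s| ≤ |f s| := by
    intro s t
    rw [abs_mul, abs_of_nonneg (hv0 t s)]
    nlinarith [abs_nonneg (f s), hv0 t s, hv1 t s]
  have Ss : ∀ s : S, Summable (fun t : ℕ => γ ^ t * (visit P πn d0 t s * f s)) :=
    fun s => summable_geom_bound (le_of_lt hγ0) hγ1 (hfb s)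
  calc ∑' t : ℕ, γ ^ t * ∑ s, visit P πn d0 t s * f s
      = ∑' t : ℕ, ∑ s, γ ^ t * (visit P πn d0 t s * f s) := by
        exact tsum_congr (fun t => by rw [Finset.mul_sum])
    _ = ∑ s, ∑' t : ℕ, γ ^ t * (visit P πn d0 t s * f s) :=
        Summable.tsum_finsetSum (fun s _ => Ss s)
    _ = ∑ s, (∑' t : ℕ, γ ^ t * visit P πn d0 t s) * f s := by
        apply Finset.sum_congr rfl; intro s _
        rw [← tsum_mul_right]
        exact tsum_congr (fun t => by ring)


end MDPaux

lemma tvDist_comm {X : Type*} [Fintype X] (P Q : X → ℝ) : tvDist P Q = tvDist Q P := by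
  unfold tvDist
  congr 1
  exact Finset.sum_congr rfl (fun x _ => abs_sub_comm _ _)

lemma sum_mul_diff_le {X : Type*} [Fintype X] (ρ1 ρ2 g : X → ℝ) {B : ℝ}
    (hB : ∀ x, |g x| ≤ B) :
    (∑ x, ρ1 x * g x) - (∑ x, ρ2 x * g x) ≤ 2 * B * tvDist ρ1 ρ2 := by
  rw [← Finset.sum_sub_distrib]
  calc ∑ x, (ρ1 x * g x - ρ2 x * g x)
      ≤ ∑ x, |ρ1 x - ρ2 x| * B := by
        apply Finset.sum_le_sum; intro x _
        calc ρ1 x * g x - ρ2 x * g x = (ρ1 x - ρ2 x) * g x := by ring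
          _ ≤ |(ρ1 x - ρ2 x) * g x| := le_abs_self _
          _ = |ρ1 x - ρ2 x| * |g x| := abs_mul _ _
          _ ≤ |ρ1 x - ρ2 x| * B := mul_le_mul_of_nonneg_left (hB x) (abs_nonneg _)
    _ = 2 * B * tvDist ρ1 ρ2 := by
        rw [← Finset.sum_mul]; unfold tvDist; ring

end PPLaux

/-- Main bound (Theorem 2, formal statement): the performance gap of the
novice policy is controlled by the optimization error, the preference-label
misalignment, and the state distribution shift. -/
theorem ppl_main_bound {S A : Type*} [Fintype S] [Fintype A]
    (P : S → A → S → ℝ) (r : S → A → ℝ) (γ : ℝ) (d0 : S → ℝ)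
    (πh πn : S → A → ℝ) (dpref : S → ℝ) (ρpref : S → A × A → ℝ)
    (U M β : ℝ)
    (hγ0 : 0 < γ) (hγ1 : γ < 1) (hβ : 0 < β)
    (hP0 : ∀ s a s', 0 ≤ P s a s') (hP1 : ∀ s a, ∑ s', P s a s' = 1)
    (hd0 : ∀ s, 0 ≤ d0 s) (hd1 : ∑ s, d0 s = 1)
    (hh0 : ∀ s a, 0 < πh s a) (hh1 : ∀ s, ∑ a, πh s a = 1)
    (hn0 : ∀ s a, 0 < πn s a) (hn1 : ∀ s, ∑ a, πn s a = 1)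
    (hpref0 : ∀ s, 0 ≤ dpref s) (hpref1 : ∑ s, dpref s = 1)
    (hρ0 : ∀ s p, 0 ≤ ρpref s p) (hρ1 : ∀ s, ∑ p, ρpref s p = 1)
    (hU : ∀ s a a', |Qfun P r γ πh s a - Qfun P r γ πh s a'| ≤ U)
    (hhM : ∀ s a a', |Real.log (πh s a) - Real.log (πh s a')| ≤ M)
    (hnM : ∀ s a a', |Real.log (πn s a) - Real.log (πn s a')| ≤ M)
    (hε : 0 ≤ Lpref dpref ρpref β πn - Lpref dpref ρpref β πh) :
    Jval P r γ πh d0 - Jval P r γ πn d0 ≤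
      (U / (1 - γ)) *
        (Real.sqrt
          (((Lpref dpref ρpref β πn - Lpref dpref ρpref β πh) +
              4 * (β * M + Real.log 2) *
                ∑ s, dpref s *
                  tvDist (fun p : A × A => πh s p.1 * πn s p.2) (ρpref s)) /
              (2 * β) +
            β * M ^ 2 / 8) +
          2 * tvDist (dOcc P γ πn d0) dpref) := by
  classical
  -- nonempty types
  have hSne : Nonempty S := by
    by_contra h
    rw [not_nonempty_iff] at h
    rw [Finset.univ_eq_empty, Finset.sum_empty] at hd1
    norm_num at hd1
  obtain ⟨s0⟩ := id hSne
  have hAne : Nonempty A := by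
    by_contra h
    rw [not_nonempty_iff] at h
    have := hh1 s0
    rw [Finset.univ_eq_empty, Finset.sum_empty] at this
    norm_num at this
  obtain ⟨a0⟩ := id hAne
  have hU0 : 0 ≤ U := by have := hU s0 a0 a0; simpa using this
  have hM0 : 0 ≤ M := by have := hhM s0 a0 a0; simpa using this
  have hγd : (0:ℝ) < 1 - γ := by linarith
  have hh0' : ∀ s a, 0 ≤ πh s a := fun s a => le_of_lt (hh0 s a)
  have hn0' : ∀ s a, 0 ≤ πn s a := fun s a => le_of_lt (hn0 s a)
  have htv0 : ∀ s, 0 ≤ tvDist (πh s) (πn s) := fun s => PPLaux.tvDist_nonneg _ _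
  have htv1 : ∀ s, tvDist (πh s) (πn s) ≤ 1 := fun s =>
    PPLaux.tvDist_le_one (fun a => hh0' s a) (fun a => hn0' s a) (hh1 s) (hn1 s)
  -- Step A : the advantage-like quantity is controlled by U and per-state TV
  have hf_le : ∀ s, |∑ a, (πh s a - πn s a) * Qfun P r γ πh s a|
      ≤ U * tvDist (πh s) (πn s) := by
    intro s
    obtain ⟨amax, -, hamax⟩ := Finset.exists_mem_eq_sup' Finset.univ_nonempty
      (Qfun P r γ πh s)
    obtain ⟨amin, -, hamin⟩ := Finset.exists_mem_eq_inf' Finset.univ_nonempty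
      (Qfun P r γ πh s)
    set c : ℝ := (Qfun P r γ πh s amax + Qfun P r γ πh s amin) / 2 with hc
    have h1 : ∀ a, Qfun P r γ πh s a ≤ Qfun P r γ πh s amax := by
      intro a
      rw [← hamax]
      exact Finset.le_sup' _ (Finset.mem_univ a)
    have h2 : ∀ a, Qfun P r γ πh s amin ≤ Qfun P r γ πh s a := by
      intro a
      rw [← hamin]
      exact Finset.inf'_le _ (Finset.mem_univ a)
    have hgap : Qfun P r γ πh s amax - Qfun P r γ πh s amin ≤ U :=
      le_trans (le_abs_self _) (hU s amax amin)
    have hmid : ∀ a, |Qfun P r γ πh s a - c| ≤ U / 2 := by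
      intro a
      rw [abs_le]
      constructor
      · have := h2 a; rw [hc]; linarith
      · have := h1 a; rw [hc]; linarith
    have hzero : ∑ a, (πh s a - πn s a) * c = 0 := by
      rw [← Finset.sum_mul, Finset.sum_sub_distrib, hh1 s, hn1 s]
      ring
    have hsplit : ∑ a, (πh s a - πn s a) * Qfun P r γ πh s a
        = ∑ a, (πh s a - πn s a) * (Qfun P r γ πh s a - c) := by
      rw [← sub_zero (∑ a, (πh s a - πn s a) * Qfun P r γ πh s a), ← hzero,
        ← Finset.sum_sub_distrib]
      apply Finset.sum_congr rfl; intro a _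
      ring
    rw [hsplit]
    calc |∑ a, (πh s a - πn s a) * (Qfun P r γ πh s a - c)|
        ≤ ∑ a, |(πh s a - πn s a) * (Qfun P r γ πh s a - c)| :=
          Finset.abs_sum_le_sum_abs _ _
      _ ≤ ∑ a, |πh s a - πn s a| * (U / 2) := by
          apply Finset.sum_le_sum; intro a _
          rw [abs_mul]
          exact mul_le_mul_of_nonneg_left (hmid a) (abs_nonneg _)
      _ = U * tvDist (πh s) (πn s) := by
          rw [← Finset.sum_mul]
          unfold tvDist
          ring
  have hfU : ∀ s, |∑ a, (πh s a - πn s a) * Qfun P r γ πh s a| ≤ U := by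
    intro s
    refine le_trans (hf_le s) ?_
    nlinarith [htv0 s, htv1 s]
  -- Step B : performance-difference identity
  have hpdl := PPLaux.pdl (P := P) (r := r) hγ0 hγ1 hP0 hP1 hh0' hh1 hn0' hn1 hd0 hd1
  have hdOcc : ∀ s, (∑' t : ℕ, γ ^ t * visit P πn d0 t s)
      = dOcc P γ πn d0 s / (1 - γ) := by
    intro s
    unfold dOcc
    rw [eq_div_iff (ne_of_gt hγd)]
    ring
  have hJ : Jval P r γ πh d0 - Jval P r γ πn d0
      = (1 / (1 - γ)) * ∑ s, dOcc P γ πn d0 s *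
          (∑ a, (πh s a - πn s a) * Qfun P r γ πh s a) := by
    rw [hpdl, Finset.mul_sum]
    apply Finset.sum_congr rfl; intro s _
    rw [hdOcc s]
    ring
  -- Step C : distribution shift
  have hsplit2 : ∑ s, dOcc P γ πn d0 s *
        (∑ a, (πh s a - πn s a) * Qfun P r γ πh s a)
      ≤ U * (∑ s, dpref s * tvDist (πh s) (πn s))
        + 2 * U * tvDist (dOcc P γ πn d0) dpref := by
    have h1 := PPLaux.sum_mul_diff_le (dOcc P γ πn d0) dpref
      (fun s => ∑ a, (πh s a - πn s a) * Qfun P r γ πh s a) hfU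
    have h2 : ∑ s, dpref s * (∑ a, (πh s a - πn s a) * Qfun P r γ πh s a)
        ≤ U * ∑ s, dpref s * tvDist (πh s) (πn s) := by
      rw [Finset.mul_sum]
      apply Finset.sum_le_sum; intro s _
      have hfle : (∑ a, (πh s a - πn s a) * Qfun P r γ πh s a)
          ≤ U * tvDist (πh s) (πn s) := le_trans (le_abs_self _) (hf_le s)
      calc dpref s * (∑ a, (πh s a - πn s a) * Qfun P r γ πh s a)
          ≤ dpref s * (U * tvDist (πh s) (πn s)) :=
            mul_le_mul_of_nonneg_left hfle (hpref0 s)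
        _ = U * (dpref s * tvDist (πh s) (πn s)) := by ring
    linarith
  -- Step D : per-state preference gap bound (Lemma 2)
  have hGs : ∀ s, 2 * β * (tvDist (πh s) (πn s)) ^ 2 - β ^ 2 * M ^ 2 / 8
      ≤ ∑ p : A × A, πh s p.1 * πn s p.2 *
          (Real.log (1 + Real.exp (-(β * (Real.log (πn s p.1) - Real.log (πn s p.2)))))
           - Real.log (1 + Real.exp (-(β * (Real.log (πh s p.1) - Real.log (πh s p.2)))))) := by
    intro s
    have h := PPLaux.state_gap (πh s) (πn s) β M hβ
      (fun a => hh0 s a) (hh1 s) (fun a => hn0 s a) (hn1 s) (fun a b => hhM s a b)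
    rw [Fintype.sum_prod_type]
    exact h
  -- bounds on the loss integrands
  have hbn : ∀ s (p : A × A),
      |Real.log (1 + Real.exp (-(β * (Real.log (πn s p.1) - Real.log (πn s p.2)))))|
        ≤ β * M + Real.log 2 := by
    intro s p
    rw [abs_of_nonneg (PPLaux.loss_nonneg _)]
    apply PPLaux.loss_le _ (by positivity)
    have := abs_le.1 (hnM s p.1 p.2)
    nlinarith [this.1, this.2, hβ]
  have hbh : ∀ s (p : A × A),
      |Real.log (1 + Real.exp (-(β * (Real.log (πh s p.1) - Real.log (πh s p.2)))))|
        ≤ β * M + Real.log 2 := by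
    intro s p
    rw [abs_of_nonneg (PPLaux.loss_nonneg _)]
    apply PPLaux.loss_le _ (by positivity)
    have := abs_le.1 (hhM s p.1 p.2)
    nlinarith [this.1, this.2, hβ]
  -- Lemma 3 : misalignment bound
  have hLn : Lpref dpref ρpref β πn = ∑ s, dpref s * ∑ p : A × A, ρpref s p *
      Real.log (1 + Real.exp (-(β * (Real.log (πn s p.1) - Real.log (πn s p.2))))) := by
    unfold Lpref
    apply Finset.sum_congr rfl; intro s _
    congr 1
    apply Finset.sum_congr rfl; intro p _
    rw [PPLaux.neg_log_sigmoid]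
  have hLh : Lpref dpref ρpref β πh = ∑ s, dpref s * ∑ p : A × A, ρpref s p *
      Real.log (1 + Real.exp (-(β * (Real.log (πh s p.1) - Real.log (πh s p.2))))) := by
    unfold Lpref
    apply Finset.sum_congr rfl; intro s _
    congr 1
    apply Finset.sum_congr rfl; intro p _
    rw [PPLaux.neg_log_sigmoid]
  have hL3 : ∑ s, dpref s * (∑ p : A × A, πh s p.1 * πn s p.2 *
        (Real.log (1 + Real.exp (-(β * (Real.log (πn s p.1) - Real.log (πn s p.2)))))
         - Real.log (1 + Real.exp (-(β * (Real.log (πh s p.1) - Real.log (πh s p.2)))))))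
      ≤ (Lpref dpref ρpref β πn - Lpref dpref ρpref β πh)
        + 4 * (β * M + Real.log 2) *
          ∑ s, dpref s * tvDist (fun p : A × A => πh s p.1 * πn s p.2) (ρpref s) := by
    rw [hLn, hLh, ← Finset.sum_sub_distrib, Finset.mul_sum, ← Finset.sum_add_distrib]
    apply Finset.sum_le_sum; intro s _
    have key : (∑ p : A × A, πh s p.1 * πn s p.2 *
          (Real.log (1 + Real.exp (-(β * (Real.log (πn s p.1) - Real.log (πn s p.2)))))
           - Real.log (1 + Real.exp (-(β * (Real.log (πh s p.1) - Real.log (πh s p.2)))))))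
        ≤ ((∑ p : A × A, ρpref s p *
              Real.log (1 + Real.exp (-(β * (Real.log (πn s p.1) - Real.log (πn s p.2))))))
            - ∑ p : A × A, ρpref s p *
              Real.log (1 + Real.exp (-(β * (Real.log (πh s p.1) - Real.log (πh s p.2))))))
          + 4 * (β * M + Real.log 2) *
            tvDist (fun p : A × A => πh s p.1 * πn s p.2) (ρpref s) := by
      have hs1 := PPLaux.sum_mul_diff_le (fun p : A × A => πh s p.1 * πn s p.2) (ρpref s)
        (fun p : A × A => Real.log (1 + Real.exp
          (-(β * (Real.log (πn s p.1) - Real.log (πn s p.2)))))) (hbn s)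
      have hs2 := PPLaux.sum_mul_diff_le (ρpref s) (fun p : A × A => πh s p.1 * πn s p.2)
        (fun p : A × A => Real.log (1 + Real.exp
          (-(β * (Real.log (πh s p.1) - Real.log (πh s p.2)))))) (hbh s)
      rw [PPLaux.tvDist_comm] at hs2
      have hsub : (∑ p : A × A, πh s p.1 * πn s p.2 *
            (Real.log (1 + Real.exp (-(β * (Real.log (πn s p.1) - Real.log (πn s p.2)))))
             - Real.log (1 + Real.exp (-(β * (Real.log (πh s p.1) - Real.log (πh s p.2)))))))
          = (∑ p : A × A, πh s p.1 * πn s p.2 *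
              Real.log (1 + Real.exp (-(β * (Real.log (πn s p.1) - Real.log (πn s p.2))))))
            - ∑ p : A × A, πh s p.1 * πn s p.2 *
              Real.log (1 + Real.exp (-(β * (Real.log (πh s p.1) - Real.log (πh s p.2))))) := by
        rw [← Finset.sum_sub_distrib]
        apply Finset.sum_congr rfl; intro p _
        ring
      rw [hsub]
      linarith
    calc dpref s * (∑ p : A × A, πh s p.1 * πn s p.2 *
          (Real.log (1 + Real.exp (-(β * (Real.log (πn s p.1) - Real.log (πn s p.2)))))
           - Real.log (1 + Real.exp (-(β * (Real.log (πh s p.1) - Real.log (πh s p.2)))))))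
        ≤ dpref s * (((∑ p : A × A, ρpref s p *
              Real.log (1 + Real.exp (-(β * (Real.log (πn s p.1) - Real.log (πn s p.2))))))
            - ∑ p : A × A, ρpref s p *
              Real.log (1 + Real.exp (-(β * (Real.log (πh s p.1) - Real.log (πh s p.2))))))
          + 4 * (β * M + Real.log 2) *
            tvDist (fun p : A × A => πh s p.1 * πn s p.2) (ρpref s)) :=
          mul_le_mul_of_nonneg_left key (hpref0 s)
      _ = (dpref s * (∑ p : A × A, ρpref s p *
              Real.log (1 + Real.exp (-(β * (Real.log (πn s p.1) - Real.log (πn s p.2))))))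
            - dpref s * ∑ p : A × A, ρpref s p *
              Real.log (1 + Real.exp (-(β * (Real.log (πh s p.1) - Real.log (πh s p.2))))))
          + 4 * (β * M + Real.log 2) *
            (dpref s * tvDist (fun p : A × A => πh s p.1 * πn s p.2) (ρpref s)) := by
          ring
  -- Step E : Cauchy–Schwarz and assembling the square-root bound
  have hT1sq : (∑ s, dpref s * tvDist (πh s) (πn s)) ^ 2
      ≤ ∑ s, dpref s * tvDist (πh s) (πn s) ^ 2 := by
    have cs := Finset.sum_mul_sq_le_sq_mul_sq Finset.univ
      (fun s => Real.sqrt (dpref s))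
      (fun s => Real.sqrt (dpref s) * tvDist (πh s) (πn s))
    have e1 : ∀ s : S, Real.sqrt (dpref s) * (Real.sqrt (dpref s) * tvDist (πh s) (πn s))
        = dpref s * tvDist (πh s) (πn s) := by
      intro s; rw [← mul_assoc, Real.mul_self_sqrt (hpref0 s)]
    have e2 : ∀ s : S, (Real.sqrt (dpref s)) ^ 2 = dpref s :=
      fun s => Real.sq_sqrt (hpref0 s)
    have e3 : ∀ s : S, (Real.sqrt (dpref s) * tvDist (πh s) (πn s)) ^ 2
        = dpref s * tvDist (πh s) (πn s) ^ 2 := by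
      intro s; rw [mul_pow, Real.sq_sqrt (hpref0 s)]
    rw [Finset.sum_congr rfl (fun s _ => e1 s), Finset.sum_congr rfl (fun s _ => e2 s),
      Finset.sum_congr rfl (fun s _ => e3 s), hpref1, one_mul] at cs
    exact cs
  have htv2 : ∀ s, tvDist (πh s) (πn s) ^ 2
      ≤ (∑ p : A × A, πh s p.1 * πn s p.2 *
          (Real.log (1 + Real.exp (-(β * (Real.log (πn s p.1) - Real.log (πn s p.2)))))
           - Real.log (1 + Real.exp (-(β * (Real.log (πh s p.1) - Real.log (πh s p.2)))))))
          / (2 * β) + β * M ^ 2 / 16 := by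
    intro s
    have h := hGs s
    have h2β : (0:ℝ) < 2 * β := by linarith
    rw [div_add' _ _ _ (ne_of_gt h2β), le_div_iff₀ h2β]
    nlinarith [h]
  have hsumtv2 : ∑ s, dpref s * tvDist (πh s) (πn s) ^ 2
      ≤ (∑ s, dpref s * (∑ p : A × A, πh s p.1 * πn s p.2 *
          (Real.log (1 + Real.exp (-(β * (Real.log (πn s p.1) - Real.log (πn s p.2)))))
           - Real.log (1 + Real.exp (-(β * (Real.log (πh s p.1) - Real.log (πh s p.2))))))))
          / (2 * β) + β * M ^ 2 / 16 := by
    have h2β : (0:ℝ) < 2 * β := by linarith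
    calc ∑ s, dpref s * tvDist (πh s) (πn s) ^ 2
        ≤ ∑ s, dpref s * ((∑ p : A × A, πh s p.1 * πn s p.2 *
            (Real.log (1 + Real.exp (-(β * (Real.log (πn s p.1) - Real.log (πn s p.2)))))
             - Real.log (1 + Real.exp (-(β * (Real.log (πh s p.1) - Real.log (πh s p.2)))))))
            / (2 * β) + β * M ^ 2 / 16) := by
          apply Finset.sum_le_sum; intro s _
          exact mul_le_mul_of_nonneg_left (htv2 s) (hpref0 s)
      _ = (∑ s, dpref s * (∑ p : A × A, πh s p.1 * πn s p.2 *
            (Real.log (1 + Real.exp (-(β * (Real.log (πn s p.1) - Real.log (πn s p.2)))))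
             - Real.log (1 + Real.exp (-(β * (Real.log (πh s p.1) - Real.log (πh s p.2))))))))
            / (2 * β) + β * M ^ 2 / 16 := by
          have expand : ∀ x y : ℝ,
              y * (x / (2 * β) + β * M ^ 2 / 16)
                = y * x / (2 * β) + β * M ^ 2 / 16 * y := fun x y => by ring
          simp only [expand]
          rw [Finset.sum_add_distrib, ← Finset.sum_div, ← Finset.mul_sum, hpref1, mul_one]
  -- the square-root bound on the expected TV
  have hT1 : ∑ s, dpref s * tvDist (πh s) (πn s) ≤
      Real.sqrt (((Lpref dpref ρpref β πn - Lpref dpref ρpref β πh) +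
              4 * (β * M + Real.log 2) *
                ∑ s, dpref s *
                  tvDist (fun p : A × A => πh s p.1 * πn s p.2) (ρpref s)) /
              (2 * β) +
            β * M ^ 2 / 8) := by
    have h2β : (0:ℝ) < 2 * β := by linarith
    have h16 : β * M ^ 2 / 16 ≤ β * M ^ 2 / 8 := by
      nlinarith [mul_nonneg (le_of_lt hβ) (sq_nonneg M)]
    have hXsq : (∑ s, dpref s * tvDist (πh s) (πn s)) ^ 2 ≤ ((Lpref dpref ρpref β πn - Lpref dpref ρpref β πh) +
              4 * (β * M + Real.log 2) *
                ∑ s, dpref s *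
                  tvDist (fun p : A × A => πh s p.1 * πn s p.2) (ρpref s)) /
              (2 * β) +
            β * M ^ 2 / 8 := by
      calc (∑ s, dpref s * tvDist (πh s) (πn s)) ^ 2
          ≤ ∑ s, dpref s * tvDist (πh s) (πn s) ^ 2 := hT1sq
        _ ≤ (∑ s, dpref s * (∑ p : A × A, πh s p.1 * πn s p.2 *
            (Real.log (1 + Real.exp (-(β * (Real.log (πn s p.1) - Real.log (πn s p.2)))))
             - Real.log (1 + Real.exp (-(β * (Real.log (πh s p.1) - Real.log (πh s p.2))))))))
              / (2 * β) + β * M ^ 2 / 16 := hsumtv2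
        _ ≤ ((Lpref dpref ρpref β πn - Lpref dpref ρpref β πh) +
              4 * (β * M + Real.log 2) *
                ∑ s, dpref s *
                  tvDist (fun p : A × A => πh s p.1 * πn s p.2) (ρpref s)) /
              (2 * β) + β * M ^ 2 / 16 := by
            have hdiv : (∑ s, dpref s * (∑ p : A × A, πh s p.1 * πn s p.2 *
            (Real.log (1 + Real.exp (-(β * (Real.log (πn s p.1) - Real.log (πn s p.2)))))
             - Real.log (1 + Real.exp (-(β * (Real.log (πh s p.1) - Real.log (πh s p.2))))))))
                / (2 * β) ≤ ((Lpref dpref ρpref β πn - Lpref dpref ρpref β πh) +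
                4 * (β * M + Real.log 2) *
                  ∑ s, dpref s *
                    tvDist (fun p : A × A => πh s p.1 * πn s p.2) (ρpref s)) / (2 * β) := by
              gcongr
            linarith
        _ ≤ ((Lpref dpref ρpref β πn - Lpref dpref ρpref β πh) +
              4 * (β * M + Real.log 2) *
                ∑ s, dpref s *
                  tvDist (fun p : A × A => πh s p.1 * πn s p.2) (ρpref s)) /
              (2 * β) +
            β * M ^ 2 / 8 := by linarith
    have hT1nn : 0 ≤ ∑ s, dpref s * tvDist (πh s) (πn s) :=
      Finset.sum_nonneg (fun s _ => mul_nonneg (hpref0 s) (htv0 s))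
    have hXnn : 0 ≤ ((Lpref dpref ρpref β πn - Lpref dpref ρpref β πh) +
              4 * (β * M + Real.log 2) *
                ∑ s, dpref s *
                  tvDist (fun p : A × A => πh s p.1 * πn s p.2) (ρpref s)) /
              (2 * β) +
            β * M ^ 2 / 8 := le_trans (sq_nonneg _) hXsq
    exact (Real.le_sqrt hT1nn hXnn).2 hXsq
  -- final assembly
  rw [hJ]
  have hpos : (0:ℝ) < 1 / (1 - γ) := by positivity
  have hfinal : ∑ s, dOcc P γ πn d0 s *
        (∑ a, (πh s a - πn s a) * Qfun P r γ πh s a)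
      ≤ U * (Real.sqrt (((Lpref dpref ρpref β πn - Lpref dpref ρpref β πh) +
              4 * (β * M + Real.log 2) *
                ∑ s, dpref s *
                  tvDist (fun p : A × A => πh s p.1 * πn s p.2) (ρpref s)) /
              (2 * β) +
            β * M ^ 2 / 8) + 2 * tvDist (dOcc P γ πn d0) dpref) := by
    have hstep : U * (∑ s, dpref s * tvDist (πh s) (πn s))
        ≤ U * Real.sqrt (((Lpref dpref ρpref β πn - Lpref dpref ρpref β πh) +
              4 * (β * M + Real.log 2) *
                ∑ s, dpref s *
                  tvDist (fun p : A × A => πh s p.1 * πn s p.2) (ρpref s)) /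
              (2 * β) +
            β * M ^ 2 / 8) := mul_le_mul_of_nonneg_left hT1 hU0
    calc ∑ s, dOcc P γ πn d0 s * (∑ a, (πh s a - πn s a) * Qfun P r γ πh s a)
        ≤ U * (∑ s, dpref s * tvDist (πh s) (πn s))
          + 2 * U * tvDist (dOcc P γ πn d0) dpref := hsplit2
      _ ≤ U * Real.sqrt (((Lpref dpref ρpref β πn - Lpref dpref ρpref β πh) +
              4 * (β * M + Real.log 2) *
                ∑ s, dpref s *
                  tvDist (fun p : A × A => πh s p.1 * πn s p.2) (ρpref s)) /
              (2 * β) +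
            β * M ^ 2 / 8) + 2 * U * tvDist (dOcc P γ πn d0) dpref := by linarith
      _ = U * (Real.sqrt (((Lpref dpref ρpref β πn - Lpref dpref ρpref β πh) +
              4 * (β * M + Real.log 2) *
                ∑ s, dpref s *
                  tvDist (fun p : A × A => πh s p.1 * πn s p.2) (ρpref s)) /
              (2 * β) +
            β * M ^ 2 / 8) + 2 * tvDist (dOcc P γ πn d0) dpref) := by ring
  calc (1 / (1 - γ)) * ∑ s, dOcc P γ πn d0 s *
        (∑ a, (πh s a - πn s a) * Qfun P r γ πh s a)
      ≤ (1 / (1 - γ)) *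
          (U * (Real.sqrt (((Lpref dpref ρpref β πn - Lpref dpref ρpref β πh) +
              4 * (β * M + Real.log 2) *
                ∑ s, dpref s *
                  tvDist (fun p : A × A => πh s p.1 * πn s p.2) (ρpref s)) /
              (2 * β) +
            β * M ^ 2 / 8) + 2 * tvDist (dOcc P γ πn d0) dpref)) :=
        mul_le_mul_of_nonneg_left hfinal (le_of_lt hpos)
    _ = (U / (1 - γ)) *
          (Real.sqrt (((Lpref dpref ρpref β πn - Lpref dpref ρpref β πh) +
              4 * (β * M + Real.log 2) *
                ∑ s, dpref s *
                  tvDist (fun p : A × A => πh s p.1 * πn s p.2) (ρpref s)) /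
              (2 * β) +
            β * M ^ 2 / 8) + 2 * tvDist (dOcc P γ πn d0) dpref) := by ring
end
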